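/- arXiv:2209.10432 — 9 statements merged into one kernel-verified Lean document; each statement's English description precedes it below -/
import Mathlib

section
/- The quadrature scalar products agree with the exact L² scalar product when one argument is a constant vector field: (i) if K ⊂ ℝ² is a nondegenerate triangle, c ∈ ℝ² is constant and v ∈ N0⁺(K), then (|K|/3) Σ_{i=1}^{3} c · v(m_i) = ∫_K c · v(x) dx; (ii) if K is an axis-aligned rectangle, c ∈ ℝ² is constant and v ∈ N0(K), then |K| · (½ Σ_{i=1}^{2} c₁ v₁(m_{h,i}) + ½ Σ_{j=1}^{2} c₂ v₂(m_{v,j})) = ∫_K c · v(x) dx. -/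
open MeasureTheory

/-- Euclidean scalar product on ℝ². -/
noncomputable def dot (u v : ℝ × ℝ) : ℝ := u.1 * v.1 + u.2 * v.2

/- ## Auxiliary material -/

lemma hasDerivAt_quartic (a b c d x : ℝ) :
    HasDerivAt (fun t : ℝ => a*t + b/2*t^2 + c/3*t^3 + d/4*t^4)
      (a + b*x + c*x^2 + d*x^3) x := by
  have h := ((((hasDerivAt_pow 1 x).const_mul a).add
      ((hasDerivAt_pow 2 x).const_mul (b/2))).add
      ((hasDerivAt_pow 3 x).const_mul (c/3))).add
      ((hasDerivAt_pow 4 x).const_mul (d/4))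
  convert h using 1
  · rfl
  · rfl
  · funext t; simp only [Pi.add_apply]; ring
  · push_cast; ring

lemma my_ii (a b c d lo hi : ℝ) :
    ∫ t in lo..hi, (a + b*t + c*t^2 + d*t^3) =
      (a*hi + b/2*hi^2 + c/3*hi^3 + d/4*hi^4) - (a*lo + b/2*lo^2 + c/3*lo^3 + d/4*lo^4) := by
  apply intervalIntegral.integral_eq_sub_of_hasDerivAt (fun x _ => hasDerivAt_quartic a b c d x)
  apply Continuous.intervalIntegrable
  fun_prop

lemma my_icc (a b c d lo hi : ℝ) (h : lo ≤ hi) :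
    ∫ t in Set.Icc lo hi, (a + b*t + c*t^2 + d*t^3) =
      (a*hi + b/2*hi^2 + c/3*hi^3 + d/4*hi^4) - (a*lo + b/2*lo^2 + c/3*lo^3 + d/4*lo^4) := by
  rw [integral_Icc_eq_integral_Ioc, ← intervalIntegral.integral_of_le h, my_ii]

/-- The closed standard 2-simplex. -/
def simS : Set (ℝ × ℝ) := {q : ℝ × ℝ | 0 ≤ q.1 ∧ 0 ≤ q.2 ∧ q.1 + q.2 ≤ 1}

lemma simS_meas : MeasurableSet simS := by
  have : simS = {q : ℝ × ℝ | 0 ≤ q.1} ∩ ({q : ℝ × ℝ | 0 ≤ q.2} ∩ {q : ℝ × ℝ | q.1 + q.2 ≤ 1}) := rfl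
  rw [this]
  exact ((isClosed_le continuous_const continuous_fst).inter
    ((isClosed_le continuous_const continuous_snd).inter
      (isClosed_le (continuous_fst.add continuous_snd) continuous_const))).measurableSet

lemma simplex_moments (c0 c1 c2 c3 c4 c5 : ℝ) :
    ∫ z in {q : ℝ × ℝ | 0 ≤ q.1 ∧ 0 ≤ q.2 ∧ q.1 + q.2 ≤ 1},
      (c0 + c1*z.1 + c2*z.2 + c3*z.1^2 + c4*(z.1*z.2) + c5*z.2^2)
      = c0/2 + c1/6 + c2/6 + c3/12 + c4/24 + c5/12 := by
  set F : ℝ × ℝ → ℝ := fun z => c0 + c1*z.1 + c2*z.2 + c3*z.1^2 + c4*(z.1*z.2) + c5*z.2^2 with hF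
  set S : Set (ℝ × ℝ) := {q : ℝ × ℝ | 0 ≤ q.1 ∧ 0 ≤ q.2 ∧ q.1 + q.2 ≤ 1} with hSdef
  have hScl : IsClosed S := by
    have : S = {q : ℝ × ℝ | 0 ≤ q.1} ∩ ({q : ℝ × ℝ | 0 ≤ q.2} ∩ {q : ℝ × ℝ | q.1 + q.2 ≤ 1}) := rfl
    rw [this]
    exact (isClosed_le continuous_const continuous_fst).inter
      ((isClosed_le continuous_const continuous_snd).inter
        (isClosed_le (continuous_fst.add continuous_snd) continuous_const))
  have hS : MeasurableSet S := hScl.measurableSet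
  have hFc : Continuous F := by fun_prop
  have hsub : S ⊆ Set.Icc ((0:ℝ),(0:ℝ)) ((1:ℝ),(1:ℝ)) := by
    rintro ⟨x1, x2⟩ ⟨h1, h2, h3⟩
    constructor
    · exact ⟨h1, h2⟩
    · exact ⟨by dsimp at *; linarith, by dsimp at *; linarith⟩
  have hint : IntegrableOn F S := (hFc.continuousOn.integrableOn_compact isCompact_Icc).mono_set hsub
  have hind : Integrable (S.indicator F) := (integrable_indicator_iff hS).mpr hint
  rw [← integral_indicator hS]
  rw [Measure.volume_eq_prod] at hind ⊢
  rw [integral_prod _ hind]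
  have key : (fun x : ℝ => ∫ y : ℝ, S.indicator F (x, y)) =
      (Set.Icc (0:ℝ) 1).indicator (fun x => (c0 + c2/2 + c5/3) + (c1 - c0 + c4/2 - c2 - c5)*x
        + (c3 - c1 + c2/2 - c4 + c5)*x^2 + (-c3 + c4/2 - c5/3)*x^3) := by
    funext x
    by_cases hx : x ∈ Set.Icc (0:ℝ) 1
    · rw [Set.indicator_of_mem hx]
      have h1 : ∀ y : ℝ, S.indicator F (x, y) = (Set.Icc 0 (1-x)).indicator (fun y => F (x,y)) y := by
        intro y
        by_cases hy : y ∈ Set.Icc (0:ℝ) (1-x)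
        · rw [Set.indicator_of_mem hy,
            Set.indicator_of_mem (show (x,y) ∈ S from ⟨hx.1, hy.1, by have := hy.2; dsimp; linarith⟩)]
        · rw [Set.indicator_of_notMem hy, Set.indicator_of_notMem]
          intro hmem
          exact hy ⟨hmem.2.1, by have := hmem.2.2; dsimp at this; linarith⟩
      simp_rw [h1]
      rw [integral_indicator measurableSet_Icc]
      have e1 : ∫ y in Set.Icc 0 (1-x), F (x, y)
          = ∫ y in Set.Icc 0 (1-x), ((c0 + c1*x + c3*x^2) + (c2 + c4*x)*y + c5*y^2 + 0*y^3) :=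
        setIntegral_congr_fun measurableSet_Icc (fun y _ => by simp only [hF]; ring)
      rw [e1, my_icc _ _ _ _ _ _ (by linarith [hx.2])]
      ring
    · rw [Set.indicator_of_notMem hx]
      have h0 : ∀ y : ℝ, S.indicator F (x, y) = 0 := by
        intro y
        apply Set.indicator_of_notMem
        intro hmem
        rcases hmem with ⟨hm1, hm2, hm3⟩
        dsimp at hm1 hm2 hm3
        simp only [Set.mem_Icc, not_and_or, not_le] at hx
        rcases hx with h | h <;> linarith
      simp_rw [h0, integral_zero]
  rw [key, integral_indicator measurableSet_Icc]
  rw [my_icc _ _ _ _ _ _ (zero_le_one)]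
  ring

lemma simplex_moments' (c0 c1 c2 c3 c4 c5 : ℝ) :
    ∫ z in simS, (c0 + c1*z.1 + c2*z.2 + c3*z.1^2 + c4*(z.1*z.2) + c5*z.2^2)
      = c0/2 + c1/6 + c2/6 + c3/12 + c4/24 + c5/12 := by
  unfold simS
  exact simplex_moments c0 c1 c2 c3 c4 c5

noncomputable def lmapM (a b c d : ℝ) : (ℝ × ℝ) →ₗ[ℝ] (ℝ × ℝ) :=
  Matrix.toLin (Module.Basis.finTwoProd ℝ) (Module.Basis.finTwoProd ℝ) !![a, c; b, d]

lemma lmapM_apply (a b c d : ℝ) (x : ℝ × ℝ) :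
    lmapM a b c d x = (x.1*a + x.2*c, x.1*b + x.2*d) := by
  have hx : x = x.1 • (Module.Basis.finTwoProd ℝ) 0 + x.2 • (Module.Basis.finTwoProd ℝ) 1 := by
    simp [Module.Basis.finTwoProd_zero, Module.Basis.finTwoProd_one, Prod.ext_iff]
  rw [lmapM]
  conv_lhs => rw [hx]
  rw [map_add, _root_.map_smul, _root_.map_smul, Matrix.toLin_self, Matrix.toLin_self]
  simp [Fin.sum_univ_two, Module.Basis.finTwoProd_zero, Module.Basis.finTwoProd_one, Prod.ext_iff]

lemma lmapM_det (a b c d : ℝ) : LinearMap.det (lmapM a b c d) = a*d - b*c := by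
  rw [lmapM, LinearMap.det_toLin, Matrix.det_fin_two_of]
  ring

noncomputable def clmM (a b c d : ℝ) : (ℝ × ℝ) →L[ℝ] (ℝ × ℝ) :=
  (lmapM a b c d).toContinuousLinearMap

lemma clmM_apply (a b c d : ℝ) (x : ℝ × ℝ) :
    clmM a b c d x = (x.1*a + x.2*c, x.1*b + x.2*d) := lmapM_apply a b c d x

lemma clmM_det (a b c d : ℝ) : (clmM a b c d).det = a*d - b*c := by
  rw [ContinuousLinearMap.det, clmM, LinearMap.coe_toContinuousLinearMap, lmapM_det]

noncomputable def Tmap (p0 : ℝ × ℝ) (a b c d : ℝ) : ℝ × ℝ → ℝ × ℝ :=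
  fun x => p0 + clmM a b c d x

lemma Tmap_apply (p0 : ℝ × ℝ) (a b c d : ℝ) (x : ℝ × ℝ) :
    Tmap p0 a b c d x = (p0.1 + x.1*a + x.2*c, p0.2 + x.1*b + x.2*d) := by
  rw [Tmap, clmM_apply, Prod.ext_iff]
  constructor <;> dsimp <;> ring

lemma Tmap_image_convexHull (p0 : ℝ × ℝ) (a b c d : ℝ) (s : Set (ℝ × ℝ)) :
    Tmap p0 a b c d '' (convexHull ℝ s) = convexHull ℝ (Tmap p0 a b c d '' s) := by
  have hmk : ∀ q : ℝ × ℝ, Tmap p0 a b c d q = lmapM a b c d (q -ᵥ 0) +ᵥ Tmap p0 a b c d 0 := by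
    intro q
    rw [Tmap_apply, Tmap_apply, vsub_eq_sub, sub_zero, vadd_eq_add, lmapM_apply, Prod.ext_iff]
    constructor <;> dsimp <;> ring
  have h := (AffineMap.mk' (Tmap p0 a b c d) (lmapM a b c d) 0 hmk).image_convexHull s
  rwa [AffineMap.coe_mk'] at h

lemma Tmap_hasFDerivAt (p0 : ℝ × ℝ) (a b c d : ℝ) (x : ℝ × ℝ) :
    HasFDerivAt (Tmap p0 a b c d) (clmM a b c d) x :=
  ((clmM a b c d).hasFDerivAt).const_add p0

lemma Tmap_inj (p0 : ℝ × ℝ) (a b c d : ℝ) (h : a*d - b*c ≠ 0) :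
    Function.Injective (Tmap p0 a b c d) := by
  intro u u' he
  rw [Tmap_apply, Tmap_apply, Prod.ext_iff] at he
  obtain ⟨e1, e2⟩ := he
  dsimp at e1 e2
  have k1 : (u.1 - u'.1) * (a*d - b*c) = 0 := by linear_combination d*e1 - c*e2
  have k2 : (u.2 - u'.2) * (a*d - b*c) = 0 := by linear_combination a*e2 - b*e1
  have hu1 : u.1 = u'.1 := by
    rcases mul_eq_zero.mp k1 with h' | h'
    · linarith
    · exact absurd h' h
  have hu2 : u.2 = u'.2 := by
    rcases mul_eq_zero.mp k2 with h' | h'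
    · linarith
    · exact absurd h' h
  exact Prod.ext hu1 hu2

lemma simS_hull :
    convexHull ℝ ({((0:ℝ),(0:ℝ)), ((1:ℝ),(0:ℝ)), ((0:ℝ),(1:ℝ))} : Set (ℝ × ℝ)) = simS := by
  apply Set.Subset.antisymm
  · apply convexHull_min
    · rintro x (rfl | rfl | rfl) <;> exact ⟨by norm_num, by norm_num, by norm_num⟩
    · rintro ⟨x1, x2⟩ hx ⟨y1, y2⟩ hy s t hs ht hst
      obtain ⟨hx1, hx2, hx3⟩ := hx
      obtain ⟨hy1, hy2, hy3⟩ := hy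
      dsimp at hx1 hx2 hx3 hy1 hy2 hy3
      refine ⟨?_, ?_, ?_⟩ <;> simp only [simS, Prod.smul_fst, Prod.smul_snd, Prod.fst_add,
        Prod.snd_add, Set.mem_setOf_eq, smul_eq_mul] <;> nlinarith
  · rintro ⟨x1, x2⟩ ⟨h1, h2, h3⟩
    dsimp at h1 h2 h3
    set Hull := convexHull ℝ ({((0:ℝ),(0:ℝ)), ((1:ℝ),(0:ℝ)), ((0:ℝ),(1:ℝ))} : Set (ℝ × ℝ)) with hH
    have hc : Convex ℝ Hull := convex_convexHull ℝ _
    have m0 : ((0:ℝ),(0:ℝ)) ∈ Hull := subset_convexHull ℝ _ (by simp)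
    have m1 : ((1:ℝ),(0:ℝ)) ∈ Hull := subset_convexHull ℝ _ (by simp)
    have m2 : ((0:ℝ),(1:ℝ)) ∈ Hull := subset_convexHull ℝ _ (by simp)
    by_cases h : x1 + x2 = 0
    · have hx1' : x1 = 0 := by linarith
      have hx2' : x2 = 0 := by linarith
      rw [hx1', hx2']
      exact m0
    · have ht : 0 < x1 + x2 := lt_of_le_of_ne (by linarith) (Ne.symm h)
      have hr := hc m1 m2 (div_nonneg h1 ht.le) (div_nonneg h2 ht.le)
        (by field_simp : x1/(x1+x2) + x2/(x1+x2) = 1)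
      have hkey := hc hr m0 ht.le (by linarith : (0:ℝ) ≤ 1 - (x1 + x2))
        (by ring : (x1 + x2) + (1 - (x1 + x2)) = 1)
      have heq : ((x1, x2) : ℝ × ℝ) = (x1 + x2) • ((x1/(x1+x2)) • ((1:ℝ),(0:ℝ))
          + (x2/(x1+x2)) • ((0:ℝ),(1:ℝ))) + (1 - (x1 + x2)) • ((0:ℝ),(0:ℝ)) := by
        simp only [Prod.ext_iff, Prod.smul_fst, Prod.smul_snd, Prod.fst_add, Prod.snd_add,
          smul_eq_mul]
        constructor <;> field_simp <;> ring
      rw [heq]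
      exact hkey

/-- The quadrature scalar products agree with the exact L² scalar
product when one argument is a constant vector field:
(i) on a nondegenerate triangle `K` for `v ∈ N0⁺(K)` (enriched Nédélec space spanned
by `Φ⁰_ij = λ_i ∇λ_j − λ_j ∇λ_i` and the bubbles `Φ^B_ij = λ_i λ_j ∇λ_k`),
`(|K|/3) Σᵢ c ⬝ v(mᵢ) = ∫_K c ⬝ v`;
(ii) on an axis-aligned rectangle `R` for `w ∈ N0(R) = {(α+βy, γ+δx)}`,
`|R| (½ Σᵢ c₁ w₁(m_{h,i}) + ½ Σⱼ c₂ w₂(m_{v,j})) = ∫_R c ⬝ w`. -/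
theorem stmt_2
    -- triangle data
    (p : Fin 3 → ℝ × ℝ) (hp : AffineIndependent ℝ p)
    (K : Set (ℝ × ℝ)) (hK : K = convexHull ℝ (Set.range p))
    (m : Fin 3 → ℝ × ℝ) (hm : ∀ i : Fin 3, m i = midpoint ℝ (p (i + 1)) (p (i + 2)))
    (lam : Fin 3 → ℝ × ℝ → ℝ) (g : Fin 3 → ℝ × ℝ) (cc : Fin 3 → ℝ)
    (hlam : ∀ i x, lam i x = dot (g i) x + cc i)
    (hdelta : ∀ i j, lam i (p j) = if i = j then 1 else 0)
    (Phi0 PhiB : Fin 3 → ℝ × ℝ → ℝ × ℝ)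
    (hPhi0 : ∀ i x, Phi0 i x = lam i x • g (i + 1) - lam (i + 1) x • g i)
    (hPhiB : ∀ i x, PhiB i x = (lam i x * lam (i + 1) x) • g (i + 2))
    (v : ℝ × ℝ → ℝ × ℝ) (av bv : Fin 3 → ℝ)
    (hv : ∀ x, v x = ∑ i : Fin 3, (av i • Phi0 i x + bv i • PhiB i x))
    (cvec : ℝ × ℝ)
    -- rectangle data
    (a₁ b₁ a₂ b₂ : ℝ) (h1 : a₁ < b₁) (h2 : a₂ < b₂)
    (R : Set (ℝ × ℝ)) (hR : R = Set.Icc a₁ b₁ ×ˢ Set.Icc a₂ b₂)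
    (AR : ℝ) (hAR : AR = (b₁ - a₁) * (b₂ - a₂))
    (w : ℝ × ℝ → ℝ × ℝ) (α β γ δ : ℝ)
    (hw : ∀ x : ℝ × ℝ, w x = (α + β * x.2, γ + δ * x.1))
    (dvec : ℝ × ℝ) :
    ((volume K).toReal / 3) * (∑ i : Fin 3, dot cvec (v (m i))) = ∫ x in K, dot cvec (v x)
    ∧
    AR * ((1 / 2) * (dvec.1 * (w ((a₁ + b₁) / 2, a₂)).1 + dvec.1 * (w ((a₁ + b₁) / 2, b₂)).1)
        + (1 / 2) * (dvec.2 * (w (a₁, (a₂ + b₂) / 2)).2 + dvec.2 * (w (b₁, (a₂ + b₂) / 2)).2))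
      = ∫ x in R, dot dvec (w x) := by
  constructor
  · -- ==================== triangle ====================
    clear hR hAR hw h1 h2
    -- Fin 3 index arithmetic
    have i01 : ((0:Fin 3) + 1) = 1 := by decide
    have i02 : ((0:Fin 3) + 2) = 2 := by decide
    have i11 : ((1:Fin 3) + 1) = 2 := by decide
    have i12 : ((1:Fin 3) + 2) = 0 := by decide
    have i21 : ((2:Fin 3) + 1) = 0 := by decide
    have i22 : ((2:Fin 3) + 2) = 1 := by decide
    -- the nine delta equations, in coordinates
    have hd : ∀ i j : Fin 3, (g i).1 * (p j).1 + (g i).2 * (p j).2 + cc i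
        = if i = j then 1 else 0 := by
      intro i j
      have h := hdelta i j
      rw [hlam] at h
      simpa [dot] using h
    have h00 : (g 0).1 * (p 0).1 + (g 0).2 * (p 0).2 + cc 0 = 1 := by simpa using hd 0 0
    have h01 : (g 0).1 * (p 1).1 + (g 0).2 * (p 1).2 + cc 0 = 0 := by simpa using hd 0 1
    have h02 : (g 0).1 * (p 2).1 + (g 0).2 * (p 2).2 + cc 0 = 0 := by simpa using hd 0 2
    have h10 : (g 1).1 * (p 0).1 + (g 1).2 * (p 0).2 + cc 1 = 0 := by simpa using hd 1 0
    have h11 : (g 1).1 * (p 1).1 + (g 1).2 * (p 1).2 + cc 1 = 1 := by simpa using hd 1 1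
    have h12 : (g 1).1 * (p 2).1 + (g 1).2 * (p 2).2 + cc 1 = 0 := by simpa using hd 1 2
    have h20 : (g 2).1 * (p 0).1 + (g 2).2 * (p 0).2 + cc 2 = 0 := by simpa using hd 2 0
    have h21 : (g 2).1 * (p 1).1 + (g 2).2 * (p 1).2 + cc 2 = 0 := by simpa using hd 2 1
    have h22 : (g 2).1 * (p 2).1 + (g 2).2 * (p 2).2 + cc 2 = 1 := by simpa using hd 2 2
    -- nondegeneracy of the Jacobian
    have hDne : ((p 1).1 - (p 0).1) * ((p 2).2 - (p 0).2)
        - ((p 1).2 - (p 0).2) * ((p 2).1 - (p 0).1) ≠ 0 := by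
      intro hD
      have e11 : (g 1).1 * ((p 1).1 - (p 0).1) + (g 1).2 * ((p 1).2 - (p 0).2) = 1 := by
        linear_combination h11 - h10
      have e12 : (g 1).1 * ((p 2).1 - (p 0).1) + (g 1).2 * ((p 2).2 - (p 0).2) = 0 := by
        linear_combination h12 - h10
      have e21 : (g 2).1 * ((p 1).1 - (p 0).1) + (g 2).2 * ((p 1).2 - (p 0).2) = 0 := by
        linear_combination h21 - h20
      have e22 : (g 2).1 * ((p 2).1 - (p 0).1) + (g 2).2 * ((p 2).2 - (p 0).2) = 1 := by
        linear_combination h22 - h20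
      have key : ((g 1).1*(g 2).2 - (g 1).2*(g 2).1) *
          (((p 1).1 - (p 0).1) * ((p 2).2 - (p 0).2)
            - ((p 1).2 - (p 0).2) * ((p 2).1 - (p 0).1)) = 1 := by
        linear_combination ((g 2).1*((p 2).1 - (p 0).1) + (g 2).2*((p 2).2 - (p 0).2)) * e11
          - ((g 2).1*((p 1).1 - (p 0).1) + (g 2).2*((p 1).2 - (p 0).2)) * e12 + e22
      rw [hD, mul_zero] at key
      exact one_ne_zero key.symm
    -- barycentric coordinates pulled back to the reference simplex
    have hl0 : ∀ x : ℝ × ℝ, lam 0 (Tmap (p 0) ((p 1).1 - (p 0).1) ((p 1).2 - (p 0).2)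
        ((p 2).1 - (p 0).1) ((p 2).2 - (p 0).2) x) = 1 - x.1 - x.2 := by
      intro x
      rw [Tmap_apply, hlam]
      simp only [dot]
      linear_combination (1 - x.1 - x.2)*h00 + x.1*h01 + x.2*h02
    have hl1 : ∀ x : ℝ × ℝ, lam 1 (Tmap (p 0) ((p 1).1 - (p 0).1) ((p 1).2 - (p 0).2)
        ((p 2).1 - (p 0).1) ((p 2).2 - (p 0).2) x) = x.1 := by
      intro x
      rw [Tmap_apply, hlam]
      simp only [dot]
      linear_combination (1 - x.1 - x.2)*h10 + x.1*h11 + x.2*h12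
    have hl2 : ∀ x : ℝ × ℝ, lam 2 (Tmap (p 0) ((p 1).1 - (p 0).1) ((p 1).2 - (p 0).2)
        ((p 2).1 - (p 0).1) ((p 2).2 - (p 0).2) x) = x.2 := by
      intro x
      rw [Tmap_apply, hlam]
      simp only [dot]
      linear_combination (1 - x.1 - x.2)*h20 + x.1*h21 + x.2*h22
    -- K is the image of the reference simplex
    have hKT : K = Tmap (p 0) ((p 1).1 - (p 0).1) ((p 1).2 - (p 0).2)
        ((p 2).1 - (p 0).1) ((p 2).2 - (p 0).2) '' simS := by
      rw [hK]
      have t0 : Tmap (p 0) ((p 1).1 - (p 0).1) ((p 1).2 - (p 0).2)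
          ((p 2).1 - (p 0).1) ((p 2).2 - (p 0).2) ((0:ℝ),(0:ℝ)) = p 0 := by
        rw [Tmap_apply, Prod.ext_iff]; constructor <;> dsimp <;> ring
      have t1 : Tmap (p 0) ((p 1).1 - (p 0).1) ((p 1).2 - (p 0).2)
          ((p 2).1 - (p 0).1) ((p 2).2 - (p 0).2) ((1:ℝ),(0:ℝ)) = p 1 := by
        rw [Tmap_apply, Prod.ext_iff]; constructor <;> dsimp <;> ring
      have t2 : Tmap (p 0) ((p 1).1 - (p 0).1) ((p 1).2 - (p 0).2)
          ((p 2).1 - (p 0).1) ((p 2).2 - (p 0).2) ((0:ℝ),(1:ℝ)) = p 2 := by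
        rw [Tmap_apply, Prod.ext_iff]; constructor <;> dsimp <;> ring
      have hr : Set.range p = Tmap (p 0) ((p 1).1 - (p 0).1) ((p 1).2 - (p 0).2)
          ((p 2).1 - (p 0).1) ((p 2).2 - (p 0).2)
            '' ({((0:ℝ),(0:ℝ)), ((1:ℝ),(0:ℝ)), ((0:ℝ),(1:ℝ))} : Set (ℝ × ℝ)) := by
        rw [Set.image_insert_eq, Set.image_insert_eq, Set.image_singleton, t0, t1, t2]
        ext z
        constructor
        · rintro ⟨i, rfl⟩
          fin_cases i <;> simp
        · rintro (rfl | rfl | rfl)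
          exacts [⟨0, rfl⟩, ⟨1, rfl⟩, ⟨2, rfl⟩]
      rw [hr, ← Tmap_image_convexHull, simS_hull]
    -- change of variables data
    have hfd : ∀ x ∈ simS, HasFDerivWithinAt (Tmap (p 0) ((p 1).1 - (p 0).1) ((p 1).2 - (p 0).2)
        ((p 2).1 - (p 0).1) ((p 2).2 - (p 0).2))
        (clmM ((p 1).1 - (p 0).1) ((p 1).2 - (p 0).2) ((p 2).1 - (p 0).1) ((p 2).2 - (p 0).2))
        simS x :=
      fun x _ => (Tmap_hasFDerivAt _ _ _ _ _ x).hasFDerivWithinAt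
    have hinj : Set.InjOn (Tmap (p 0) ((p 1).1 - (p 0).1) ((p 1).2 - (p 0).2)
        ((p 2).1 - (p 0).1) ((p 2).2 - (p 0).2)) simS :=
      (Tmap_inj _ _ _ _ _ hDne).injOn
    -- generic expansion of the scalar product
    have hq : ∀ z : ℝ × ℝ, dot cvec (v z) =
        av 0 * (lam 0 z * (cvec.1 * (g 1).1 + cvec.2 * (g 1).2)
              - lam 1 z * (cvec.1 * (g 0).1 + cvec.2 * (g 0).2))
        + bv 0 * ((lam 0 z * lam 1 z) * (cvec.1 * (g 2).1 + cvec.2 * (g 2).2))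
        + av 1 * (lam 1 z * (cvec.1 * (g 2).1 + cvec.2 * (g 2).2)
              - lam 2 z * (cvec.1 * (g 1).1 + cvec.2 * (g 1).2))
        + bv 1 * ((lam 1 z * lam 2 z) * (cvec.1 * (g 0).1 + cvec.2 * (g 0).2))
        + av 2 * (lam 2 z * (cvec.1 * (g 0).1 + cvec.2 * (g 0).2)
              - lam 0 z * (cvec.1 * (g 2).1 + cvec.2 * (g 2).2))
        + bv 2 * ((lam 2 z * lam 0 z) * (cvec.1 * (g 1).1 + cvec.2 * (g 1).2)) := by
      intro z
      rw [hv z, Fin.sum_univ_three]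
      simp only [hPhi0, hPhiB, i01, i02, i11, i12, i21, i22, dot, Prod.fst_add, Prod.snd_add,
        Prod.fst_sub, Prod.snd_sub, Prod.smul_fst, Prod.smul_snd, smul_eq_mul]
      ring
    -- pulled-back integrand is an explicit quadratic
    have hfT : ∀ x : ℝ × ℝ, dot cvec (v (Tmap (p 0) ((p 1).1 - (p 0).1) ((p 1).2 - (p 0).2)
        ((p 2).1 - (p 0).1) ((p 2).2 - (p 0).2) x)) =
        (av 0 * (cvec.1 * (g 1).1 + cvec.2 * (g 1).2)
          - av 2 * (cvec.1 * (g 2).1 + cvec.2 * (g 2).2))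
        + (av 1 * (cvec.1 * (g 2).1 + cvec.2 * (g 2).2)
          + av 2 * (cvec.1 * (g 2).1 + cvec.2 * (g 2).2)
          - av 0 * (cvec.1 * (g 0).1 + cvec.2 * (g 0).2)
          - av 0 * (cvec.1 * (g 1).1 + cvec.2 * (g 1).2)
          + bv 0 * (cvec.1 * (g 2).1 + cvec.2 * (g 2).2)) * x.1
        + (av 2 * (cvec.1 * (g 0).1 + cvec.2 * (g 0).2)
          + av 2 * (cvec.1 * (g 2).1 + cvec.2 * (g 2).2)
          - av 0 * (cvec.1 * (g 1).1 + cvec.2 * (g 1).2)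
          - av 1 * (cvec.1 * (g 1).1 + cvec.2 * (g 1).2)
          + bv 2 * (cvec.1 * (g 1).1 + cvec.2 * (g 1).2)) * x.2
        + (-(bv 0 * (cvec.1 * (g 2).1 + cvec.2 * (g 2).2))) * x.1^2
        + (bv 1 * (cvec.1 * (g 0).1 + cvec.2 * (g 0).2)
          - bv 0 * (cvec.1 * (g 2).1 + cvec.2 * (g 2).2)
          - bv 2 * (cvec.1 * (g 1).1 + cvec.2 * (g 1).2)) * (x.1*x.2)
        + (-(bv 2 * (cvec.1 * (g 1).1 + cvec.2 * (g 1).2))) * x.2^2 := by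
      intro x
      rw [hq, hl0, hl1, hl2]
      ring
    -- the exact integral
    have hRHS : ∫ x in K, dot cvec (v x) =
        |((p 1).1 - (p 0).1) * ((p 2).2 - (p 0).2)
          - ((p 1).2 - (p 0).2) * ((p 2).1 - (p 0).1)| *
        ((av 0 * (cvec.1 * (g 1).1 + cvec.2 * (g 1).2)
          - av 2 * (cvec.1 * (g 2).1 + cvec.2 * (g 2).2))/2
        + (av 1 * (cvec.1 * (g 2).1 + cvec.2 * (g 2).2)
          + av 2 * (cvec.1 * (g 2).1 + cvec.2 * (g 2).2)
          - av 0 * (cvec.1 * (g 0).1 + cvec.2 * (g 0).2)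
          - av 0 * (cvec.1 * (g 1).1 + cvec.2 * (g 1).2)
          + bv 0 * (cvec.1 * (g 2).1 + cvec.2 * (g 2).2))/6
        + (av 2 * (cvec.1 * (g 0).1 + cvec.2 * (g 0).2)
          + av 2 * (cvec.1 * (g 2).1 + cvec.2 * (g 2).2)
          - av 0 * (cvec.1 * (g 1).1 + cvec.2 * (g 1).2)
          - av 1 * (cvec.1 * (g 1).1 + cvec.2 * (g 1).2)
          + bv 2 * (cvec.1 * (g 1).1 + cvec.2 * (g 1).2))/6
        + (-(bv 0 * (cvec.1 * (g 2).1 + cvec.2 * (g 2).2)))/12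
        + (bv 1 * (cvec.1 * (g 0).1 + cvec.2 * (g 0).2)
          - bv 0 * (cvec.1 * (g 2).1 + cvec.2 * (g 2).2)
          - bv 2 * (cvec.1 * (g 1).1 + cvec.2 * (g 1).2))/24
        + (-(bv 2 * (cvec.1 * (g 1).1 + cvec.2 * (g 1).2)))/12) := by
      rw [hKT]
      rw [integral_image_eq_integral_abs_det_fderiv_smul volume simS_meas hfd hinj
        (fun x => dot cvec (v x))]
      rw [integral_smul, clmM_det, smul_eq_mul]
      rw [setIntegral_congr_fun simS_meas (fun x _ => hfT x), simplex_moments']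
    -- the volume of K
    have hvolK : (volume K).toReal =
        |((p 1).1 - (p 0).1) * ((p 2).2 - (p 0).2)
          - ((p 1).2 - (p 0).2) * ((p 2).1 - (p 0).1)| * (1/2) := by
      have e1 : ∫ _x in K, (1:ℝ) = (volume K).toReal := by
        rw [setIntegral_const, smul_eq_mul, mul_one]; rfl
      rw [← e1, hKT]
      rw [integral_image_eq_integral_abs_det_fderiv_smul volume simS_meas hfd hinj
        (fun _ => (1:ℝ))]
      rw [integral_smul, clmM_det, smul_eq_mul]
      congr 1
      have := simplex_moments' 1 0 0 0 0 0
      rw [setIntegral_congr_fun simS_meas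
        (fun z _ => by ring : Set.EqOn (fun _ => (1:ℝ))
          (fun z : ℝ × ℝ => 1 + 0*z.1 + 0*z.2 + 0*z.1^2 + 0*(z.1*z.2) + 0*z.2^2) simS), this]
      norm_num
    -- lambda values at the edge midpoints
    have hmid : ∀ a b : ℝ × ℝ, midpoint ℝ a b = (((a.1+b.1)/2 : ℝ), ((a.2+b.2)/2 : ℝ)) := by
      intro a b
      rw [midpoint_eq_smul_add, Prod.ext_iff]
      constructor <;>
        simp only [Prod.smul_fst, Prod.smul_snd, Prod.fst_add, Prod.snd_add, smul_eq_mul,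
          invOf_eq_inv] <;> ring
    have hm0 : m 0 = midpoint ℝ (p 1) (p 2) := by have := hm 0; rwa [i01, i02] at this
    have hm1 : m 1 = midpoint ℝ (p 2) (p 0) := by have := hm 1; rwa [i11, i12] at this
    have hm2 : m 2 = midpoint ℝ (p 0) (p 1) := by have := hm 2; rwa [i21, i22] at this
    have l00 : lam 0 (m 0) = 0 := by
      rw [hm0, hmid, hlam]; simp only [dot]; linear_combination (h01 + h02)/2
    have l10 : lam 1 (m 0) = 1/2 := by
      rw [hm0, hmid, hlam]; simp only [dot]; linear_combination (h11 + h12)/2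
    have l20 : lam 2 (m 0) = 1/2 := by
      rw [hm0, hmid, hlam]; simp only [dot]; linear_combination (h21 + h22)/2
    have l01 : lam 0 (m 1) = 1/2 := by
      rw [hm1, hmid, hlam]; simp only [dot]; linear_combination (h02 + h00)/2
    have l11 : lam 1 (m 1) = 0 := by
      rw [hm1, hmid, hlam]; simp only [dot]; linear_combination (h12 + h10)/2
    have l21 : lam 2 (m 1) = 1/2 := by
      rw [hm1, hmid, hlam]; simp only [dot]; linear_combination (h22 + h20)/2
    have l02 : lam 0 (m 2) = 1/2 := by
      rw [hm2, hmid, hlam]; simp only [dot]; linear_combination (h00 + h01)/2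
    have l12 : lam 1 (m 2) = 1/2 := by
      rw [hm2, hmid, hlam]; simp only [dot]; linear_combination (h10 + h11)/2
    have l22 : lam 2 (m 2) = 0 := by
      rw [hm2, hmid, hlam]; simp only [dot]; linear_combination (h20 + h21)/2
    -- put everything together
    rw [hvolK, Fin.sum_univ_three, hq, hq, hq, l00, l10, l20, l01, l11, l21, l02, l12, l22, hRHS]
    ring
  · -- ==================== rectangle ====================
    have hwdot : ∀ x : ℝ × ℝ, dot dvec (w x) = dvec.1*(α+β*x.2) + dvec.2*(γ+δ*x.1) := by
      intro x
      rw [hw]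
      simp only [dot]
    have hio : IntegrableOn (fun x : ℝ × ℝ => dot dvec (w x))
        (Set.Icc a₁ b₁ ×ˢ Set.Icc a₂ b₂) volume := by
      rw [show (fun x : ℝ × ℝ => dot dvec (w x))
          = (fun x : ℝ × ℝ => dvec.1*(α+β*x.2) + dvec.2*(γ+δ*x.1)) from funext hwdot]
      exact (by fun_prop : Continuous
        (fun x : ℝ × ℝ => dvec.1*(α+β*x.2) + dvec.2*(γ+δ*x.1))).continuousOn.integrableOn_compact
        (isCompact_Icc.prod isCompact_Icc)
    have hRint : ∫ x in R, dot dvec (w x) =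
        (b₁-a₁)*(b₂-a₂)*(dvec.1*α + dvec.2*γ) + dvec.1*β*(b₁-a₁)*(b₂^2-a₂^2)/2
          + dvec.2*δ*(b₂-a₂)*(b₁^2-a₁^2)/2 := by
      rw [hR]
      rw [show (volume : Measure (ℝ × ℝ)) = (volume : Measure ℝ).prod (volume : Measure ℝ) from
        rfl] at hio ⊢
      rw [setIntegral_prod _ hio]
      have hin : ∀ x : ℝ, (∫ y in Set.Icc a₂ b₂, dot dvec (w (x, y))) =
          ((dvec.1*α + dvec.2*γ + dvec.2*δ*x) * (b₂-a₂) + dvec.1*β*(b₂^2-a₂^2)/2) := by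
        intro x
        rw [setIntegral_congr_fun measurableSet_Icc
          (fun y _ => by simp only [hwdot]; ring :
            Set.EqOn (fun y => dot dvec (w (x, y)))
              (fun y : ℝ => (dvec.1*α + dvec.2*(γ+δ*x)) + (dvec.1*β)*y + 0*y^2 + 0*y^3)
              (Set.Icc a₂ b₂))]
        rw [my_icc _ _ _ _ _ _ h2.le]
        ring
      rw [setIntegral_congr_fun measurableSet_Icc (fun x _ => hin x :
        Set.EqOn (fun x : ℝ => ∫ y in Set.Icc a₂ b₂, dot dvec (w (x, y)))
          (fun x : ℝ => (dvec.1*α + dvec.2*γ + dvec.2*δ*x) * (b₂-a₂) + dvec.1*β*(b₂^2-a₂^2)/2)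
          (Set.Icc a₁ b₁))]
      rw [setIntegral_congr_fun measurableSet_Icc
        (fun x _ => by ring :
          Set.EqOn (fun x : ℝ => (dvec.1*α + dvec.2*γ + dvec.2*δ*x) * (b₂-a₂)
              + dvec.1*β*(b₂^2-a₂^2)/2)
            (fun x : ℝ => ((dvec.1*α + dvec.2*γ)*(b₂-a₂) + dvec.1*β*(b₂^2-a₂^2)/2)
              + (dvec.2*δ*(b₂-a₂))*x + 0*x^2 + 0*x^3)
            (Set.Icc a₁ b₁))]
      rw [my_icc _ _ _ _ _ _ h1.le]
      ring
    rw [hRint, hAR]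
    simp only [hw]
    ring
end

section
/- Let K ⊂ ℝ² be a nondegenerate triangle. If v ∈ N0⁺(K) satisfies v(m₁) = v(m₂) = v(m₃) = 0 at the three edge midpoints, then v = 0. Consequently, the quadrature form (u,v)_{h,K} = (|K|/3) Σ_{i=1}^{3} u(m_i) · v(m_i) is a (positive definite) inner product on the six-dimensional space N0⁺(K). -/
open MeasureTheory

/-- On a nondegenerate triangle `K`, if `v ∈ N0⁺(K)` vanishes at the
three edge midpoints then `v = 0`; consequently the quadrature form
`(u,v)_{h,K} = (|K|/3) Σᵢ u(mᵢ) ⬝ v(mᵢ)` is positive definite on `N0⁺(K)`. -/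
theorem stmt_3
    (p : Fin 3 → ℝ × ℝ) (hp : AffineIndependent ℝ p)
    (K : Set (ℝ × ℝ)) (hK : K = convexHull ℝ (Set.range p))
    (m : Fin 3 → ℝ × ℝ) (hm : ∀ i : Fin 3, m i = midpoint ℝ (p (i + 1)) (p (i + 2)))
    (lam : Fin 3 → ℝ × ℝ → ℝ) (g : Fin 3 → ℝ × ℝ) (cc : Fin 3 → ℝ)
    (hlam : ∀ i x, lam i x = dot (g i) x + cc i)
    (hdelta : ∀ i j, lam i (p j) = if i = j then 1 else 0)
    (Phi0 PhiB : Fin 3 → ℝ × ℝ → ℝ × ℝ)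
    (hPhi0 : ∀ i x, Phi0 i x = lam i x • g (i + 1) - lam (i + 1) x • g i)
    (hPhiB : ∀ i x, PhiB i x = (lam i x * lam (i + 1) x) • g (i + 2))
    (v : ℝ × ℝ → ℝ × ℝ) (av bv : Fin 3 → ℝ)
    (hv : ∀ x, v x = ∑ i : Fin 3, (av i • Phi0 i x + bv i • PhiB i x)) :
    ((∀ i : Fin 3, v (m i) = 0) → ∀ x, v x = 0)
    ∧
    ((∃ x, v x ≠ 0) →
      0 < ((volume K).toReal / 3) * ∑ i : Fin 3, dot (v (m i)) (v (m i))) := by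
  have dadd : ∀ (x y t : ℝ × ℝ), dot (x + y) t = dot x t + dot y t := by
    intro x y t; simp [dot]; ring
  have dsub : ∀ (x y t : ℝ × ℝ), dot (x - y) t = dot x t - dot y t := by
    intro x y t; simp [dot]; ring
  have dsmul : ∀ (r : ℝ) (x t : ℝ × ℝ), dot (r • x) t = r * dot x t := by
    intro r x t; simp [dot]; ring
  have dzero : ∀ t : ℝ × ℝ, dot 0 t = 0 := by intro t; simp [dot]
  have dsub2 : ∀ (t x y : ℝ × ℝ), dot t (x - y) = dot t x - dot t y := by
    intro t x y; simp [dot]; ring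
  have dmid : ∀ (u a b : ℝ × ℝ), dot u (midpoint ℝ a b) = (dot u a + dot u b) / 2 := by
    intro u a b; simp [midpoint_eq_smul_add, dot]; ring
  have part1 : (∀ i : Fin 3, v (m i) = 0) → ∀ x, v x = 0 := by
    intro h0
    have hgp : ∀ i j, dot (g i) (p j) = (if i = j then (1:ℝ) else 0) - cc i := by
      intro i j; have h := hdelta i j; rw [hlam] at h; linarith
    have hL : ∀ i k, lam i (m k) = if i = k then (0:ℝ) else 1/2 := by
      intro i k
      rw [hm, hlam, dmid, hgp, hgp]
      fin_cases i <;> fin_cases k <;>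
        norm_num (config := { decide := true }) [Fin.ext_iff] <;> try ring
    have E : ∀ (k : Fin 3) (t : ℝ × ℝ), dot (v (m k)) t = 0 := by
      intro k t; rw [h0 k, dzero]
    have expand : ∀ (k : Fin 3) (t : ℝ × ℝ),
        dot (v (m k)) t =
          ∑ i : Fin 3, (av i * (lam i (m k) * dot (g (i+1)) t - lam (i+1) (m k) * dot (g i) t)
            + bv i * (lam i (m k) * lam (i+1) (m k) * dot (g (i+2)) t)) := by
      intro k t
      rw [hv]
      simp only [Fin.sum_univ_three, hPhi0, hPhiB, dadd, dsub, dsmul]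
      try ring
    have hgu : ∀ j i, dot (g i) (p j - p 0)
        = (if i = j then (1:ℝ) else 0) - (if i = 0 then (1:ℝ) else 0) := by
      intro j i; rw [dsub2, hgp, hgp]; ring
    have key : ∀ i : Fin 3, av i = 0 ∧ bv i = 0 := by
      have e10 := (expand 0 (p 1 - p 0)).symm.trans (E 0 _)
      have e20 := (expand 0 (p 2 - p 0)).symm.trans (E 0 _)
      have e11 := (expand 1 (p 1 - p 0)).symm.trans (E 1 _)
      have e21 := (expand 1 (p 2 - p 0)).symm.trans (E 1 _)
      have e12 := (expand 2 (p 1 - p 0)).symm.trans (E 2 _)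
      have e22 := (expand 2 (p 2 - p 0)).symm.trans (E 2 _)
      simp only [Fin.sum_univ_three, hL, hgu] at e10 e20 e11 e21 e12 e22
      norm_num (config := { decide := true }) [Fin.ext_iff] at e10 e20 e11 e21 e12 e22
      have ha0 : av 0 = 0 := by linarith
      have ha1 : av 1 = 0 := by linarith
      have ha2 : av 2 = 0 := by linarith
      have hb0 : bv 0 = 0 := by linarith
      have hb1 : bv 1 = 0 := by linarith
      have hb2 : bv 2 = 0 := by linarith
      intro i
      fin_cases i
      exacts [⟨ha0, hb0⟩, ⟨ha1, hb1⟩, ⟨ha2, hb2⟩]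
    intro x
    rw [hv]
    simp [Fin.sum_univ_three, (key 0).1, (key 0).2, (key 1).1, (key 1).2,
      (key 2).1, (key 2).2]
  refine ⟨part1, ?_⟩
  rintro ⟨x, hx⟩
  have hvol : 0 < (volume K).toReal := by
    have hspan : affineSpan ℝ (Set.range p) = ⊤ :=
      hp.affineSpan_eq_top_iff_card_eq_finrank_add_one.mpr (by simp)
    have hint : (interior (convexHull ℝ (Set.range p))).Nonempty :=
      interior_convexHull_nonempty_iff_affineSpan_eq_top.mpr hspan
    have h1 : 0 < volume K := by
      rw [hK]
      exact lt_of_lt_of_le (isOpen_interior.measure_pos volume hint)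
        (measure_mono interior_subset)
    have h2 : volume K ≠ ⊤ := by
      rw [hK]
      exact ((Set.finite_range p).isCompact_convexHull (𝕜 := ℝ)).measure_lt_top.ne
    exact ENNReal.toReal_pos h1.ne' h2
  have hnm : ¬ ∀ i : Fin 3, v (m i) = 0 := fun h => hx (part1 h x)
  push_neg at hnm
  obtain ⟨i, hi⟩ := hnm
  have hpos : 0 < dot (v (m i)) (v (m i)) := by
    have h12 : (v (m i)).1 ≠ 0 ∨ (v (m i)).2 ≠ 0 := by
      by_contra h
      push_neg at h
      exact hi (Prod.ext h.1 h.2)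
    have hd : dot (v (m i)) (v (m i)) = (v (m i)).1 ^ 2 + (v (m i)).2 ^ 2 := by
      simp [dot]; ring
    rw [hd]
    rcases h12 with h | h
    · have := pow_two_pos_of_ne_zero h
      nlinarith [sq_nonneg (v (m i)).2]
    · have := pow_two_pos_of_ne_zero h
      nlinarith [sq_nonneg (v (m i)).1]
  have hnonneg : ∀ j : Fin 3, 0 ≤ dot (v (m j)) (v (m j)) := by
    intro j
    have hd : dot (v (m j)) (v (m j)) = (v (m j)).1 ^ 2 + (v (m j)).2 ^ 2 := by
      simp [dot]; ring
    rw [hd]; positivity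
  have hsum : 0 < ∑ j : Fin 3, dot (v (m j)) (v (m j)) :=
    Finset.sum_pos' (fun j _ => hnonneg j) ⟨i, Finset.mem_univ i, hpos⟩
  exact mul_pos (by positivity) hsum
end

section
/- Let K = [a₁,b₁] × [a₂,b₂] ⊂ ℝ² be an axis-aligned rectangle and let v = (v₁, v₂) ∈ N0(K). If v₁(m_{h,1}) = v₁(m_{h,2}) = 0 and v₂(m_{v,1}) = v₂(m_{v,2}) = 0, then v = 0. Consequently, the quadrature form (u,v)_{h,K} = |K| (½ Σ_{i=1}^{2} u₁(m_{h,i}) v₁(m_{h,i}) + ½ Σ_{j=1}^{2} u₂(m_{v,j}) v₂(m_{v,j})) is a positive definite inner product on N0(K). -/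
open MeasureTheory

/-- On an axis-aligned rectangle `K = [a₁,b₁] × [a₂,b₂]`, if
`v = (v₁,v₂) ∈ N0(K) = {(α+βy, γ+δx)}` satisfies `v₁(m_{h,1}) = v₁(m_{h,2}) = 0`
and `v₂(m_{v,1}) = v₂(m_{v,2}) = 0`, then `v = 0`; consequently the quadrature
form `(u,v)_{h,K} = |K| (½ Σᵢ u₁(m_{h,i}) v₁(m_{h,i}) + ½ Σⱼ u₂(m_{v,j}) v₂(m_{v,j}))`
is positive definite on `N0(K)`. -/
theorem stmt_5
    (a₁ b₁ a₂ b₂ : ℝ) (h1 : a₁ < b₁) (h2 : a₂ < b₂)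
    (K : Set (ℝ × ℝ)) (hK : K = Set.Icc a₁ b₁ ×ˢ Set.Icc a₂ b₂)
    (A : ℝ) (hA : A = (b₁ - a₁) * (b₂ - a₂))
    (v : ℝ × ℝ → ℝ × ℝ) (α β γ δ : ℝ)
    (hv : ∀ x : ℝ × ℝ, v x = (α + β * x.2, γ + δ * x.1)) :
    (((v ((a₁ + b₁) / 2, a₂)).1 = 0 → (v ((a₁ + b₁) / 2, b₂)).1 = 0 →
      (v (a₁, (a₂ + b₂) / 2)).2 = 0 → (v (b₁, (a₂ + b₂) / 2)).2 = 0 →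
      ∀ x, v x = 0)
    ∧
    ((∃ x, v x ≠ 0) →
      0 < A * ((1 / 2) * ((v ((a₁ + b₁) / 2, a₂)).1 ^ 2 + (v ((a₁ + b₁) / 2, b₂)).1 ^ 2)
             + (1 / 2) * ((v (a₁, (a₂ + b₂) / 2)).2 ^ 2 + (v (b₁, (a₂ + b₂) / 2)).2 ^ 2)))) := by
  have key : (v ((a₁ + b₁) / 2, a₂)).1 = 0 → (v ((a₁ + b₁) / 2, b₂)).1 = 0 →
      (v (a₁, (a₂ + b₂) / 2)).2 = 0 → (v (b₁, (a₂ + b₂) / 2)).2 = 0 →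
      ∀ x, v x = 0 := by
    intro q1 q2 q3 q4 x
    simp only [hv] at q1 q2 q3 q4 ⊢
    have hβ : β = 0 := by
      have : β * (b₂ - a₂) = 0 := by nlinarith
      have hne : b₂ - a₂ ≠ 0 := by linarith
      exact (mul_eq_zero.mp this).resolve_right hne
    rw [hβ] at q1
    have hα : α = 0 := by linarith
    have hδ : δ = 0 := by
      have : δ * (b₁ - a₁) = 0 := by nlinarith
      have hne : b₁ - a₁ ≠ 0 := by linarith
      exact (mul_eq_zero.mp this).resolve_right hne
    rw [hδ] at q3
    have hγ : γ = 0 := by linarith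
    simp [hα, hβ, hγ, hδ]
  refine ⟨key, ?_⟩
  rintro ⟨x, hx⟩
  have hApos : 0 < A := by rw [hA]; nlinarith
  have hsnn : 0 ≤ (1 / 2) * ((v ((a₁ + b₁) / 2, a₂)).1 ^ 2 + (v ((a₁ + b₁) / 2, b₂)).1 ^ 2)
             + (1 / 2) * ((v (a₁, (a₂ + b₂) / 2)).2 ^ 2 + (v (b₁, (a₂ + b₂) / 2)).2 ^ 2) := by
    positivity
  rcases lt_or_eq_of_le hsnn with h | h
  · exact mul_pos hApos h
  · exfalso
    have hzero := h.symm
    have h1' : (v ((a₁ + b₁) / 2, a₂)).1 = 0 := by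
      nlinarith [sq_nonneg (v ((a₁ + b₁) / 2, a₂)).1, sq_nonneg (v ((a₁ + b₁) / 2, b₂)).1, sq_nonneg (v (a₁, (a₂ + b₂) / 2)).2, sq_nonneg (v (b₁, (a₂ + b₂) / 2)).2]
    have h2' : (v ((a₁ + b₁) / 2, b₂)).1 = 0 := by
      nlinarith [sq_nonneg (v ((a₁ + b₁) / 2, a₂)).1, sq_nonneg (v ((a₁ + b₁) / 2, b₂)).1, sq_nonneg (v (a₁, (a₂ + b₂) / 2)).2, sq_nonneg (v (b₁, (a₂ + b₂) / 2)).2]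
    have h3' : (v (a₁, (a₂ + b₂) / 2)).2 = 0 := by
      nlinarith [sq_nonneg (v ((a₁ + b₁) / 2, a₂)).1, sq_nonneg (v ((a₁ + b₁) / 2, b₂)).1, sq_nonneg (v (a₁, (a₂ + b₂) / 2)).2, sq_nonneg (v (b₁, (a₂ + b₂) / 2)).2]
    have h4' : (v (b₁, (a₂ + b₂) / 2)).2 = 0 := by
      nlinarith [sq_nonneg (v ((a₁ + b₁) / 2, a₂)).1, sq_nonneg (v ((a₁ + b₁) / 2, b₂)).1, sq_nonneg (v (a₁, (a₂ + b₂) / 2)).2, sq_nonneg (v (b₁, (a₂ + b₂) / 2)).2]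
    exact hx (key h1' h2' h3' h4' x)
end

section
/- There exist absolute constants 0 < c ≤ C such that for every axis-aligned rectangle K = [a₁,b₁] × [a₂,b₂] ⊂ ℝ² and every v ∈ N0(K), c ‖v‖²_{L²(K)} ≤ |K| (½ Σ_{i=1}^{2} v₁(m_{h,i})² + ½ Σ_{j=1}^{2} v₂(m_{v,j})²) ≤ C ‖v‖²_{L²(K)}; i.e., the quadrature-induced norm is equivalent to the L²(K)-norm on N0(K), uniformly over all rectangles. -/
open MeasureTheory

/-- Squared Euclidean norm on ℝ². -/
noncomputable def sq2 (u : ℝ × ℝ) : ℝ := u.1 ^ 2 + u.2 ^ 2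

private lemma poly_int (s p q r a b : ℝ) (h : a ≤ b) :
    ∫ x in Set.Icc a b, (s * (p + q * x) ^ 2 + r)
      = s * (p ^ 2 * (b - a) + p * q * (b ^ 2 - a ^ 2) + q ^ 2 * (b ^ 3 - a ^ 3) / 3)
        + r * (b - a) := by
  rw [MeasureTheory.integral_Icc_eq_integral_Ioc, ← intervalIntegral.integral_of_le h]
  have hF : ∀ x ∈ Set.uIcc a b,
      HasDerivAt (fun x => s * p ^ 2 * x + s * (p * q) * x ^ 2 + s * q ^ 2 / 3 * x ^ 3 + r * x)
        (s * (p + q * x) ^ 2 + r) x := by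
    intro x _
    have h1 := (((hasDerivAt_id x).const_mul (s * p ^ 2)).add
        ((hasDerivAt_pow 2 x).const_mul (s * (p * q)))).add
        ((hasDerivAt_pow 3 x).const_mul (s * q ^ 2 / 3))
    have h2 := h1.add ((hasDerivAt_id x).const_mul r)
    refine h2.congr_deriv ?_
    push_cast
    ring
  rw [intervalIntegral.integral_eq_sub_of_hasDerivAt hF
      ((by continuity : Continuous fun x : ℝ => s * (p + q * x) ^ 2 + r).intervalIntegrable a b)]
  ring

private lemma poly_int' (p q r a b : ℝ) (h : a ≤ b) :
    ∫ x in Set.Icc a b, ((p + q * x) ^ 2 + r)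
      = p ^ 2 * (b - a) + p * q * (b ^ 2 - a ^ 2) + q ^ 2 * (b ^ 3 - a ^ 3) / 3
        + r * (b - a) := by
  have := poly_int 1 p q r a b h
  simp only [one_mul] at this
  linarith [this]

/-- There exist absolute constants `0 < c ≤ C` such that for every
axis-aligned rectangle `K = [a₁,b₁] × [a₂,b₂]` and every `v ∈ N0(K) = {(α+βy, γ+δx)}`:
`c ‖v‖²_{L²(K)} ≤ |K| (½ Σᵢ v₁(m_{h,i})² + ½ Σⱼ v₂(m_{v,j})²) ≤ C ‖v‖²_{L²(K)}`. -/
theorem stmt_6 :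
    ∃ c C : ℝ, 0 < c ∧ c ≤ C ∧
      ∀ a₁ b₁ a₂ b₂ : ℝ, a₁ < b₁ → a₂ < b₂ →
      ∀ K : Set (ℝ × ℝ), K = Set.Icc a₁ b₁ ×ˢ Set.Icc a₂ b₂ →
      ∀ A : ℝ, A = (b₁ - a₁) * (b₂ - a₂) →
      ∀ (v : ℝ × ℝ → ℝ × ℝ) (α β γ δ : ℝ),
        (∀ x : ℝ × ℝ, v x = (α + β * x.2, γ + δ * x.1)) →
      c * (∫ x in K, sq2 (v x))
          ≤ A * ((1 / 2) * ((v ((a₁ + b₁) / 2, a₂)).1 ^ 2 + (v ((a₁ + b₁) / 2, b₂)).1 ^ 2)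
               + (1 / 2) * ((v (a₁, (a₂ + b₂) / 2)).2 ^ 2 + (v (b₁, (a₂ + b₂) / 2)).2 ^ 2)) ∧
      A * ((1 / 2) * ((v ((a₁ + b₁) / 2, a₂)).1 ^ 2 + (v ((a₁ + b₁) / 2, b₂)).1 ^ 2)
         + (1 / 2) * ((v (a₁, (a₂ + b₂) / 2)).2 ^ 2 + (v (b₁, (a₂ + b₂) / 2)).2 ^ 2))
          ≤ C * (∫ x in K, sq2 (v x)) := by
  refine ⟨1, 3, one_pos, by norm_num, ?_⟩
  intro a₁ b₁ a₂ b₂ h1 h2 K hK A hA v α β γ δ hv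
  subst hK hA
  have h1' : a₁ ≤ b₁ := h1.le
  have h2' : a₂ ≤ b₂ := h2.le
  -- the integrand as a polynomial
  have hvv : ∀ x : ℝ × ℝ, sq2 (v x) = (α + β * x.2) ^ 2 + (γ + δ * x.1) ^ 2 := by
    intro x; rw [hv]; simp [sq2]
  set P : ℝ := (α + β * ((a₂ + b₂) / 2)) ^ 2 + (γ + δ * ((a₁ + b₁) / 2)) ^ 2 with hP
  set Q : ℝ := (β * (b₂ - a₂)) ^ 2 + (δ * (b₁ - a₁)) ^ 2 with hQ
  set Ap : ℝ := (b₁ - a₁) * (b₂ - a₂) with hAp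
  have hApos : 0 < Ap := mul_pos (by linarith) (by linarith)
  have hPnn : 0 ≤ P := add_nonneg (sq_nonneg _) (sq_nonneg _)
  have hQnn : 0 ≤ Q := add_nonneg (sq_nonneg _) (sq_nonneg _)
  -- value of the integral
  have hI : (∫ x in Set.Icc a₁ b₁ ×ˢ Set.Icc a₂ b₂, sq2 (v x)) = Ap * (P + Q / 12) := by
    have hc : Continuous fun x : ℝ × ℝ => (α + β * x.2) ^ 2 + (γ + δ * x.1) ^ 2 := by
      continuity
    have hint : IntegrableOn (fun x : ℝ × ℝ => (α + β * x.2) ^ 2 + (γ + δ * x.1) ^ 2)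
        (Set.Icc a₁ b₁ ×ˢ Set.Icc a₂ b₂) volume := by
      rw [Set.Icc_prod_Icc]
      exact hc.integrableOn_Icc
    have hstep : (∫ x in Set.Icc a₁ b₁ ×ˢ Set.Icc a₂ b₂, sq2 (v x))
        = ∫ x in Set.Icc a₁ b₁, ∫ y in Set.Icc a₂ b₂, ((α + β * y) ^ 2 + (γ + δ * x) ^ 2) := by
      simp_rw [hvv]
      rw [Measure.volume_eq_prod ℝ ℝ] at hint ⊢
      exact MeasureTheory.setIntegral_prod _ hint
    rw [hstep]
    have hin : ∀ x : ℝ, (∫ y in Set.Icc a₂ b₂, ((α + β * y) ^ 2 + (γ + δ * x) ^ 2))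
        = (b₂ - a₂) * (γ + δ * x) ^ 2
          + (α ^ 2 * (b₂ - a₂) + α * β * (b₂ ^ 2 - a₂ ^ 2) + β ^ 2 * (b₂ ^ 3 - a₂ ^ 3) / 3) := by
      intro x
      rw [poly_int' α β ((γ + δ * x) ^ 2) a₂ b₂ h2']
      ring
    simp_rw [hin]
    rw [poly_int (b₂ - a₂) γ δ
        (α ^ 2 * (b₂ - a₂) + α * β * (b₂ ^ 2 - a₂ ^ 2) + β ^ 2 * (b₂ ^ 3 - a₂ ^ 3) / 3)
        a₁ b₁ h1']
    rw [hAp, hP, hQ]; ring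
  -- value of the quadrature
  have hQd : Ap * ((1 / 2) * ((v ((a₁ + b₁) / 2, a₂)).1 ^ 2 + (v ((a₁ + b₁) / 2, b₂)).1 ^ 2)
         + (1 / 2) * ((v (a₁, (a₂ + b₂) / 2)).2 ^ 2 + (v (b₁, (a₂ + b₂) / 2)).2 ^ 2))
      = Ap * (P + Q / 4) := by
    simp only [hv]
    rw [hP, hQ]; ring
  rw [hI, hQd]
  constructor
  · nlinarith [mul_nonneg hApos.le hQnn]
  · nlinarith [mul_nonneg hApos.le hPnn]
end

section
/- Let K ⊂ ℝ² be a nondegenerate triangle with edge midpoints m₁, m₂, m₃. For each cyclic pair (i,j) with remaining index k, there exist unique real coefficients α_ij, β_ij, γ_ij such that the modified Nédélec function Φ_ij = Φ⁰_ij + α_ij Φ^B_ij + β_ij Φ^B_jk + γ_ij Φ^B_ki satisfies ∇λ_l · Φ_ij(m_l) = 0 for l = 1, 2, 3, i.e., the components of Φ_ij normal to the respective edges vanish at all three edge midpoints. -/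
open MeasureTheory

/-- For each cyclic pair `(i,j) = (i,i+1)` (with `k = i+2`), there exist
unique coefficients `α_ij, β_ij, γ_ij ∈ ℝ` such that the modified Nédélec function
`Φ_ij = Φ⁰_ij + α_ij Φ^B_ij + β_ij Φ^B_jk + γ_ij Φ^B_ki` satisfies
`∇λ_l ⬝ Φ_ij(m_l) = 0` for `l = 1,2,3`. -/
theorem stmt_10
    (p : Fin 3 → ℝ × ℝ) (hp : AffineIndependent ℝ p)
    (K : Set (ℝ × ℝ)) (hK : K = convexHull ℝ (Set.range p))
    (m : Fin 3 → ℝ × ℝ) (hm : ∀ i : Fin 3, m i = midpoint ℝ (p (i + 1)) (p (i + 2)))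
    (lam : Fin 3 → ℝ × ℝ → ℝ) (g : Fin 3 → ℝ × ℝ) (cc : Fin 3 → ℝ)
    (hlam : ∀ i x, lam i x = dot (g i) x + cc i)
    (hdelta : ∀ i j, lam i (p j) = if i = j then 1 else 0)
    (Phi0 PhiB : Fin 3 → ℝ × ℝ → ℝ × ℝ)
    (hPhi0 : ∀ i x, Phi0 i x = lam i x • g (i + 1) - lam (i + 1) x • g i)
    (hPhiB : ∀ i x, PhiB i x = (lam i x * lam (i + 1) x) • g (i + 2))
    (i : Fin 3) :
    ∃! abc : ℝ × ℝ × ℝ, ∀ l : Fin 3,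
      dot (g l)
        (Phi0 i (m l) + abc.1 • PhiB i (m l) + abc.2.1 • PhiB (i + 1) (m l)
          + abc.2.2 • PhiB (i + 2) (m l)) = 0 := by
  -- Index arithmetic in `Fin 3`
  have i11 : ∀ j : Fin 3, j + 1 + 1 = j + 2 := by decide
  have i21 : ∀ j : Fin 3, j + 2 + 1 = j := by decide
  have i12 : ∀ j : Fin 3, j + 1 + 2 = j := by decide
  have i22 : ∀ j : Fin 3, j + 2 + 2 = j + 1 := by decide
  have ne1 : ∀ j : Fin 3, j + 1 ≠ j := by decide
  have ne2 : ∀ j : Fin 3, j + 2 ≠ j := by decide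
  have ne3 : ∀ j : Fin 3, j + 2 ≠ j + 1 := by decide
  have ne4 : ∀ j : Fin 3, j ≠ j + 1 := by decide
  have ne5 : ∀ j : Fin 3, j ≠ j + 2 := by decide
  have ne6 : ∀ j : Fin 3, j + 1 ≠ j + 2 := by decide
  have cover : ∀ j l : Fin 3, l = j ∨ l = j + 1 ∨ l = j + 2 := by decide
  -- the gradients are nonzero
  have hg : ∀ l : Fin 3, dot (g l) (g l) ≠ 0 := by
    intro l hz
    have hgz : g l = 0 := by
      have h1 : (g l).1 ^ 2 + (g l).2 ^ 2 = 0 := by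
        simpa [dot, sq] using hz
      have h2 := (add_eq_zero_iff_of_nonneg (sq_nonneg _) (sq_nonneg _)).1 h1
      have e1 : (g l).1 = 0 := by nlinarith [h2.1]
      have e2 : (g l).2 = 0 := by nlinarith [h2.2]
      exact Prod.ext e1 e2
    have ha : lam l (p l) = 1 := by rw [hdelta]; simp
    have hb : lam l (p (l + 1)) = 0 := by rw [hdelta, if_neg (ne4 l)]
    rw [hlam, hgz] at ha hb
    simp [dot] at ha hb
    rw [hb] at ha
    norm_num at ha
  -- values of barycentric coordinates at the midpoints
  have hlm : ∀ j l : Fin 3, lam j (m l) = if j = l then 0 else 1 / 2 := by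
    intro j l
    have hmid : lam j (m l) = (lam j (p (l + 1)) + lam j (p (l + 2))) / 2 := by
      rw [hlam, hlam, hlam, hm, midpoint_eq_smul_add]
      simp [dot, Prod.smul_fst, Prod.smul_snd, Prod.fst_add, Prod.snd_add, smul_eq_mul]
      ring
    rcases cover j l with rfl | rfl | rfl
    · rw [hmid, hdelta, hdelta, if_neg (ne4 _), if_neg (ne5 _), if_pos rfl]
      norm_num
    · rw [hmid, i11 _, i12 _, hdelta, hdelta, if_neg (ne5 _), if_pos rfl,
        if_neg (ne4 _)]
      norm_num
    · rw [hmid, i21 _, i22 _, hdelta, hdelta, if_pos rfl, if_neg (ne4 _),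
        if_neg (ne5 _)]
      norm_num
  -- the key expansion of the normal component at midpoint `l`
  have key : ∀ (a b c : ℝ) (l : Fin 3),
      dot (g l) (Phi0 i (m l) + a • PhiB i (m l) + b • PhiB (i + 1) (m l)
        + c • PhiB (i + 2) (m l))
      = (if i = l then 0 else 1/2) * dot (g l) (g (i + 1))
        - (if i + 1 = l then 0 else 1/2) * dot (g l) (g i)
        + a * ((if i = l then 0 else 1/2) * (if i + 1 = l then 0 else 1/2))
            * dot (g l) (g (i + 2))
        + b * ((if i + 1 = l then 0 else 1/2) * (if i + 2 = l then 0 else 1/2))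
            * dot (g l) (g i)
        + c * ((if i + 2 = l then 0 else 1/2) * (if i = l then 0 else 1/2))
            * dot (g l) (g (i + 1)) := by
    intro a b c l
    rw [hPhi0, hPhiB, hPhiB, hPhiB, i11 i, i21 i, i12 i, i22 i,
      hlm i l, hlm (i + 1) l, hlm (i + 2) l]
    simp only [dot, Prod.fst_add, Prod.snd_add, Prod.fst_sub, Prod.snd_sub,
      Prod.smul_fst, Prod.smul_snd, smul_eq_mul]
    ring
  refine ⟨⟨2 * (dot (g (i + 2)) (g i) - dot (g (i + 2)) (g (i + 1))) / dot (g (i + 2)) (g (i + 2)),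
    2, -2⟩, ?_, ?_⟩
  · intro l
    rw [key]
    rcases cover i l with rfl | rfl | rfl
    · rw [if_pos rfl, if_neg (ne1 _), if_neg (ne2 _)]
      ring
    · rw [if_pos rfl, if_neg (ne4 _), if_neg (ne3 _)]
      ring
    · rw [if_pos rfl, if_neg (ne5 _), if_neg (ne6 _)]
      have hK2 := hg (i + 2)
      field_simp
      ring
  · rintro ⟨a, b, c⟩ h
    have h1 := h i
    have h2 := h (i + 1)
    have h3 := h (i + 2)
    rw [key] at h1 h2 h3
    rw [if_pos rfl, if_neg (ne1 i), if_neg (ne2 i)] at h1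
    rw [if_pos rfl, if_neg (ne4 i), if_neg (ne3 i)] at h2
    rw [if_pos rfl, if_neg (ne5 i), if_neg (ne6 i)] at h3
    have hgi := hg i
    have hgi1 := hg (i + 1)
    have hgi2 := hg (i + 2)
    refine Prod.ext ?_ (Prod.ext ?_ ?_)
    · show a = _
      rw [eq_div_iff hgi2]
      linear_combination (4 : ℝ) * h3
    · show b = 2
      have hb : (b - 2) * dot (g i) (g i) = 0 := by linear_combination 4 * h1
      rcases mul_eq_zero.1 hb with h' | h'
      · linarith
      · exact absurd h' hgi
    · show c = -2
      have hc : (c + 2) * dot (g (i + 1)) (g (i + 1)) = 0 := by linear_combination 4 * h2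
      rcases mul_eq_zero.1 hc with h' | h'
      · linarith
      · exact absurd h' hgi1
end

section
/- Let K ⊂ ℝ² be a nondegenerate triangle, and for each cyclic pair (i,j) let Φ_ij = Φ⁰_ij + α_ij Φ^B_ij + β_ij Φ^B_jk + γ_ij Φ^B_ki be the modified Nédélec function whose normal components vanish at all three edge midpoints. Then the six functions Ψ ∈ {Φ_12, Φ_23, Φ_31, Φ^B_12, Φ^B_23, Φ^B_31} satisfy (Ψ_a, Ψ_b)_{h,K} = 0 whenever a ≠ b and (Ψ_a, Ψ_a)_{h,K} > 0 for every a, where (u,v)_{h,K} = (|K|/3) Σ_{i=1}^{3} u(m_i) · v(m_i). In other words, the local mass matrix of N0⁺(K) in this basis, computed with the edge-midpoint quadrature, is diagonal with positive diagonal entries. -/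
open MeasureTheory

/-- With the modified Nédélec functions
`Φ_ij = Φ⁰_ij + α_ij Φ^B_ij + β_ij Φ^B_jk + γ_ij Φ^B_ki` (whose normal components
vanish at all three edge midpoints), the six basis functions
`{Φ_12, Φ_23, Φ_31, Φ^B_12, Φ^B_23, Φ^B_31}` are pairwise orthogonal with positive
diagonal entries for the quadrature form `(u,v)_{h,K} = (|K|/3) Σ_l u(m_l) ⬝ v(m_l)`:
the local mass matrix is diagonal with positive diagonal. -/
theorem stmt_11
    (p : Fin 3 → ℝ × ℝ) (hp : AffineIndependent ℝ p)
    (K : Set (ℝ × ℝ)) (hK : K = convexHull ℝ (Set.range p))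
    (m : Fin 3 → ℝ × ℝ) (hm : ∀ i : Fin 3, m i = midpoint ℝ (p (i + 1)) (p (i + 2)))
    (lam : Fin 3 → ℝ × ℝ → ℝ) (g : Fin 3 → ℝ × ℝ) (cc : Fin 3 → ℝ)
    (hlam : ∀ i x, lam i x = dot (g i) x + cc i)
    (hdelta : ∀ i j, lam i (p j) = if i = j then 1 else 0)
    (Phi0 PhiB : Fin 3 → ℝ × ℝ → ℝ × ℝ)
    (hPhi0 : ∀ i x, Phi0 i x = lam i x • g (i + 1) - lam (i + 1) x • g i)
    (hPhiB : ∀ i x, PhiB i x = (lam i x * lam (i + 1) x) • g (i + 2))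
    (al be ga : Fin 3 → ℝ) (Phi : Fin 3 → ℝ × ℝ → ℝ × ℝ)
    (hPhi : ∀ i x, Phi i x =
      Phi0 i x + al i • PhiB i x + be i • PhiB (i + 1) x + ga i • PhiB (i + 2) x)
    (hnormal : ∀ i l : Fin 3, dot (g l) (Phi i (m l)) = 0) :
    ∀ s t : Fin 3 ⊕ Fin 3,
      (s ≠ t →
        ((volume K).toReal / 3) *
          ∑ l : Fin 3, dot (Sum.elim Phi PhiB s (m l)) (Sum.elim Phi PhiB t (m l)) = 0) ∧
      0 < ((volume K).toReal / 3) *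
          ∑ l : Fin 3, dot (Sum.elim Phi PhiB s (m l)) (Sum.elim Phi PhiB s (m l)) := by
  -- basic facts about dot
  have dot_zero_left : ∀ v : ℝ × ℝ, dot 0 v = 0 := by intro v; simp [dot]
  have dot_zero_right : ∀ v : ℝ × ℝ, dot v 0 = 0 := by intro v; simp [dot]
  have dot_nonneg : ∀ v : ℝ × ℝ, 0 ≤ dot v v := by
    intro v; unfold dot; nlinarith [mul_self_nonneg v.1, mul_self_nonneg v.2]
  have dot_pos : ∀ v : ℝ × ℝ, v ≠ 0 → 0 < dot v v := by
    intro v hv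
    have h12 : v.1 ≠ 0 ∨ v.2 ≠ 0 := by
      by_contra h
      push_neg at h
      exact hv (Prod.ext h.1 h.2)
    unfold dot
    rcases h12 with h | h
    · nlinarith [mul_self_pos.mpr h, mul_self_nonneg v.2]
    · nlinarith [mul_self_pos.mpr h, mul_self_nonneg v.1]
  -- dot with g in terms of lam
  have gdot : ∀ i x y, dot (g i) (x - y) = lam i x - lam i y := by
    intro i x y
    have : dot (g i) (x - y) = dot (g i) x - dot (g i) y := by
      simp [dot, Prod.fst_sub, Prod.snd_sub]; ring
    rw [this, hlam, hlam]; ring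
  -- Fin 3 facts
  have f1 : ∀ i : Fin 3, i + 1 ≠ i := by decide
  have f2 : ∀ i : Fin 3, i + 2 ≠ i := by decide
  have f3 : ∀ i : Fin 3, i + 1 + 2 = i := by decide
  have f4 : ∀ i : Fin 3, i + 2 + 2 = i + 1 := by decide
  have f5 : ∀ i : Fin 3, i ≠ i + 1 := by decide
  have f6 : ∀ i : Fin 3, i ≠ i + 2 := by decide
  have f7 : ∀ i : Fin 3, i + 1 ≠ i + 2 := by decide
  have f8 : ∀ i : Fin 3, i + 2 ≠ i + 1 := by decide
  have fcase : ∀ i l : Fin 3, l = i ∨ l = i + 1 ∨ l = i + 2 := by decide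
  -- g i ≠ 0
  have gne : ∀ i, g i ≠ 0 := by
    intro i hg
    have h := gdot i (p i) (p (i + 1))
    rw [hg, dot_zero_left, hdelta, hdelta, if_pos rfl, if_neg (f5 i)] at h
    norm_num at h
  -- lam at midpoints
  have lammid : ∀ i l : Fin 3, lam i (m l) = if i = l then 0 else 1 / 2 := by
    intro i l
    have hmid : lam i (m l) = (lam i (p (l + 1)) + lam i (p (l + 2))) / 2 := by
      rw [hm, hlam, hlam, hlam, midpoint_eq_smul_add]
      simp [dot, Prod.smul_fst, Prod.smul_snd, Prod.fst_add, Prod.snd_add]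
      ring
    rw [hmid, hdelta, hdelta]
    rcases fcase l i with rfl | rfl | rfl
    · rw [if_neg (f5 i), if_neg (f6 i), if_pos rfl]
      norm_num
    · rw [if_pos rfl, if_neg (f7 l), if_neg (f1 l)]
      norm_num
    · rw [if_neg (f8 l), if_pos rfl, if_neg (f2 l)]
      norm_num
  -- PhiB at midpoints
  have PhiBm : ∀ j l : Fin 3, PhiB j (m l) =
      if l = j + 2 then ((1 : ℝ) / 4) • g (j + 2) else 0 := by
    intro j l
    rw [hPhiB, lammid, lammid]
    rcases fcase j l with rfl | rfl | rfl
    · rw [if_pos rfl, if_neg (f6 l), zero_mul, zero_smul]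
    · rw [if_neg (f5 j), if_pos rfl, mul_zero, zero_smul, if_neg (f7 j)]
    · rw [if_neg (f6 j), if_neg (f7 j), if_pos rfl]
      norm_num
  -- Phi0 at midpoints
  have Phi0m : ∀ i l : Fin 3, Phi0 i (m l) =
      if l = i then (-(1 : ℝ) / 2) • g i
      else if l = i + 1 then ((1 : ℝ) / 2) • g (i + 1)
      else ((1 : ℝ) / 2) • g (i + 1) - ((1 : ℝ) / 2) • g i := by
    intro i l
    rw [hPhi0, lammid, lammid]
    rcases fcase i l with rfl | rfl | rfl
    · rw [if_pos rfl, if_neg (f1 l), if_pos rfl]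
      module
    · rw [if_neg (f5 i), if_pos rfl, if_neg (f1 i), if_pos rfl]
      module
    · rw [if_neg (f6 i), if_neg (f7 i), if_neg (f2 i), if_neg (f8 i)]
  -- Phi at the three midpoints
  have Phim1 : ∀ i, Phi i (m i) = (be i / 4 - 1 / 2) • g i := by
    intro i
    rw [hPhi, Phi0m, PhiBm, PhiBm, PhiBm, if_pos rfl, if_neg (f6 i),
      if_pos (f3 i).symm, if_neg (fun h => f5 i (h.trans (f4 i))), f3 i]
    module
  have Phim2 : ∀ i, Phi i (m (i + 1)) = (1 / 2 + ga i / 4) • g (i + 1) := by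
    intro i
    rw [hPhi, Phi0m, PhiBm, PhiBm, PhiBm, if_neg (f1 i), if_pos rfl,
      if_neg (f7 i), if_neg (fun h => f1 i (h.trans (f3 i))),
      if_pos (f4 i).symm, f4 i]
    module
  have Phim3 : ∀ i, Phi i (m (i + 2)) =
      ((1 : ℝ) / 2) • g (i + 1) - ((1 : ℝ) / 2) • g i + (al i / 4) • g (i + 2) := by
    intro i
    rw [hPhi, Phi0m, PhiBm, PhiBm, PhiBm, if_neg (f2 i), if_neg (f8 i),
      if_pos rfl, if_neg (fun h => f2 i (h.trans (f3 i))),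
      if_neg (fun h => f8 i (h.trans (f4 i)))]
    module
  -- scalar multiples vanish by normal condition
  have hz1 : ∀ i, Phi i (m i) = 0 := by
    intro i
    have h := hnormal i i
    rw [Phim1 i] at h
    have hd : dot (g i) ((be i / 4 - 1 / 2) • g i) = (be i / 4 - 1 / 2) * dot (g i) (g i) := by
      simp [dot, Prod.smul_fst, Prod.smul_snd]; ring
    rw [hd] at h
    have := (mul_eq_zero.mp h).resolve_right (dot_pos _ (gne i)).ne'
    rw [Phim1 i, this, zero_smul]
  have hz2 : ∀ i, Phi i (m (i + 1)) = 0 := by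
    intro i
    have h := hnormal i (i + 1)
    rw [Phim2 i] at h
    have hd : dot (g (i + 1)) ((1 / 2 + ga i / 4) • g (i + 1)) =
        (1 / 2 + ga i / 4) * dot (g (i + 1)) (g (i + 1)) := by
      simp [dot, Prod.smul_fst, Prod.smul_snd]; ring
    rw [hd] at h
    have := (mul_eq_zero.mp h).resolve_right (dot_pos _ (gne (i + 1))).ne'
    rw [Phim2 i, this, zero_smul]
  have hz : ∀ i l : Fin 3, l ≠ i + 2 → Phi i (m l) = 0 := by
    have hcase : ∀ i l : Fin 3, l ≠ i + 2 → l = i ∨ l = i + 1 := by decide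
    intro i l h
    rcases hcase i l h with h' | h'
    · rw [h']; exact hz1 i
    · rw [h']; exact hz2 i
  have hzB : ∀ i l : Fin 3, l ≠ i + 2 → PhiB i (m l) = 0 := by
    intro i l h
    rw [PhiBm, if_neg h]
  -- the value at m (i+2) is nonzero
  have hvne : ∀ i, Phi i (m (i + 2)) ≠ 0 := by
    intro i h
    have e : dot (Phi i (m (i + 2))) (p i - p (i + 1)) = -1 := by
      rw [Phim3]
      have expand : ∀ (a b c : ℝ) (u v w x : ℝ × ℝ),
          dot (a • u - b • v + c • w) x = a * dot u x - b * dot v x + c * dot w x := by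
        intro a b c u v w x
        simp [dot, Prod.smul_fst, Prod.smul_snd, Prod.fst_sub, Prod.snd_sub,
          Prod.fst_add, Prod.snd_add]
        ring
      rw [expand]
      have c1 : dot (g (i + 1)) (p i - p (i + 1)) = -1 := by
        rw [gdot, hdelta, hdelta, if_neg (f1 i), if_pos rfl]; ring
      have c2 : dot (g i) (p i - p (i + 1)) = 1 := by
        rw [gdot, hdelta, hdelta, if_pos rfl, if_neg (f5 i)]; ring
      have c3 : dot (g (i + 2)) (p i - p (i + 1)) = 0 := by
        rw [gdot, hdelta, hdelta, if_neg (f2 i), if_neg (fun hh => (f7 i) hh.symm)]; ring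
      rw [c1, c2, c3]; ring
    rw [h, dot_zero_left] at e
    norm_num at e
  have hBvne : ∀ i, PhiB i (m (i + 2)) ≠ 0 := by
    intro i h
    rw [PhiBm, if_pos rfl] at h
    exact gne (i + 2) (by simpa using smul_eq_zero.mp h |>.resolve_left (by norm_num))
  -- positivity of the area factor
  have hvol : 0 < (volume K).toReal / 3 := by
    have hspan : affineSpan ℝ (Set.range p) = ⊤ :=
      hp.affineSpan_eq_top_iff_card_eq_finrank_add_one.mpr (by simp)
    have hconv : Convex ℝ (convexHull ℝ (Set.range p)) := convex_convexHull ℝ _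
    have hint : (interior (convexHull ℝ (Set.range p))).Nonempty :=
      hconv.interior_nonempty_iff_affineSpan_eq_top.mpr (by rwa [affineSpan_convexHull])
    have hpos : 0 < volume K := by
      rw [hK]; exact Measure.measure_pos_of_nonempty_interior _ hint
    have hfin : volume K < ⊤ := by
      rw [hK]; exact ((Set.finite_range p).isCompact_convexHull (𝕜 := ℝ)).measure_lt_top
    have := ENNReal.toReal_pos hpos.ne' hfin.ne
    linarith
  -- injectivity of +2
  have hadd2 : ∀ i j : Fin 3, i + 2 = j + 2 → i = j := by decide
  -- generic vanishing-sum lemma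
  have sumzero : ∀ (F G : Fin 3 → ℝ × ℝ) (a b : Fin 3), a ≠ b →
      (∀ l, l ≠ a → F l = 0) → (∀ l, l ≠ b → G l = 0) →
      ∑ l : Fin 3, dot (F l) (G l) = 0 := by
    intro F G a b hab hF hG
    apply Finset.sum_eq_zero
    intro l _
    by_cases h : l = a
    · rw [hG l (by rw [h]; exact hab), dot_zero_right]
    · rw [hF l h, dot_zero_left]
  intro s t
  constructor
  · intro hst
    apply mul_eq_zero_of_right
    rcases s with i | i <;> rcases t with j | j
    · have hij : i ≠ j := fun h => hst (by rw [h])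
      exact sumzero _ _ (i + 2) (j + 2) (fun h => hij (hadd2 _ _ h))
        (fun l hl => hz i l hl) (fun l hl => hz j l hl)
    · by_cases hij : i = j
      · subst hij
        apply Finset.sum_eq_zero
        intro l _
        by_cases h : l = i + 2
        · subst h
          simp only [Sum.elim_inl, Sum.elim_inr]
          rw [PhiBm, if_pos rfl]
          have hd : dot (Phi i (m (i + 2))) (((1 : ℝ) / 4) • g (i + 2)) =
              (1 / 4) * dot (g (i + 2)) (Phi i (m (i + 2))) := by
            simp [dot, Prod.smul_fst, Prod.smul_snd]; ring
          rw [hd, hnormal i (i + 2), mul_zero]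
        · simp only [Sum.elim_inl, Sum.elim_inr]
          rw [hzB i l h, dot_zero_right]
      · exact sumzero _ _ (i + 2) (j + 2) (fun h => hij (hadd2 _ _ h))
          (fun l hl => hz i l hl) (fun l hl => hzB j l hl)
    · by_cases hij : i = j
      · subst hij
        apply Finset.sum_eq_zero
        intro l _
        by_cases h : l = i + 2
        · subst h
          simp only [Sum.elim_inl, Sum.elim_inr]
          rw [PhiBm, if_pos rfl]
          have hd : dot (((1 : ℝ) / 4) • g (i + 2)) (Phi i (m (i + 2))) =
              (1 / 4) * dot (g (i + 2)) (Phi i (m (i + 2))) := by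
            simp [dot, Prod.smul_fst, Prod.smul_snd]; ring
          rw [hd, hnormal i (i + 2), mul_zero]
        · simp only [Sum.elim_inl, Sum.elim_inr]
          rw [hzB i l h, dot_zero_left]
      · exact sumzero _ _ (i + 2) (j + 2) (fun h => hij (hadd2 _ _ h))
          (fun l hl => hzB i l hl) (fun l hl => hz j l hl)
    · have hij : i ≠ j := fun h => hst (by rw [h])
      exact sumzero _ _ (i + 2) (j + 2) (fun h => hij (hadd2 _ _ h))
        (fun l hl => hzB i l hl) (fun l hl => hzB j l hl)
  · apply mul_pos hvol
    rcases s with i | i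
    · apply Finset.sum_pos'
      · intro l _; exact dot_nonneg _
      · exact ⟨i + 2, Finset.mem_univ _, dot_pos _ (hvne i)⟩
    · apply Finset.sum_pos'
      · intro l _; exact dot_nonneg _
      · exact ⟨i + 2, Finset.mem_univ _, dot_pos _ (hBvne i)⟩
end

section
/- Let K ⊂ ℝ² be a nondegenerate triangle. The six vector fields Φ⁰_12, Φ⁰_23, Φ⁰_31, Φ^B_12, Φ^B_23, Φ^B_31 are linearly independent over ℝ; in particular the enriched space N0⁺(K) has dimension 6, and the lowest-order Nédélec space N0(K) = span{Φ⁰_12, Φ⁰_23, Φ⁰_31} intersects the bubble space B(K) = span{Φ^B_12, Φ^B_23, Φ^B_31} only in {0}. -/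
open MeasureTheory

/-- On a nondegenerate triangle, the six vector fields
`Φ⁰_12, Φ⁰_23, Φ⁰_31, Φ^B_12, Φ^B_23, Φ^B_31` are linearly independent over ℝ:
any vanishing linear combination has all coefficients zero. In particular
`dim N0⁺(K) = 6` and `N0(K) ∩ B(K) = {0}`. -/
theorem stmt_12
    (p : Fin 3 → ℝ × ℝ) (hp : AffineIndependent ℝ p)
    (K : Set (ℝ × ℝ)) (hK : K = convexHull ℝ (Set.range p))
    (lam : Fin 3 → ℝ × ℝ → ℝ) (g : Fin 3 → ℝ × ℝ) (cc : Fin 3 → ℝ)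
    (hlam : ∀ i x, lam i x = dot (g i) x + cc i)
    (hdelta : ∀ i j, lam i (p j) = if i = j then 1 else 0)
    (Phi0 PhiB : Fin 3 → ℝ × ℝ → ℝ × ℝ)
    (hPhi0 : ∀ i x, Phi0 i x = lam i x • g (i + 1) - lam (i + 1) x • g i)
    (hPhiB : ∀ i x, PhiB i x = (lam i x * lam (i + 1) x) • g (i + 2)) :
    LinearIndependent ℝ (Sum.elim Phi0 PhiB : Fin 3 ⊕ Fin 3 → (ℝ × ℝ → ℝ × ℝ)) := by
  classical
  have n1 : ∀ j : Fin 3, j + 1 ≠ j := by decide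
  have n2 : ∀ j : Fin 3, j + 2 ≠ j := by decide
  have n3 : ∀ j : Fin 3, j + 1 ≠ j + 2 := by decide
  have n4 : ∀ j : Fin 3, j + 1 + 2 = j := by decide
  have n5 : ∀ j : Fin 3, j ≠ j + 1 := by decide
  -- key: for each j, g (j+1) and g (j+2) are linearly independent
  have key : ∀ j : Fin 3, ∀ α β : ℝ, α • g (j+1) + β • g (j+2) = 0 → α = 0 ∧ β = 0 := by
    intro j α β h
    have hf : ∀ x, α * lam (j+1) x + β * lam (j+2) x = α * cc (j+1) + β * cc (j+2) := by
      intro x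
      have h1 : dot (α • g (j+1) + β • g (j+2)) x = 0 := by rw [h]; simp [dot]
      have h2 : dot (α • g (j+1) + β • g (j+2)) x
          = α * dot (g (j+1)) x + β * dot (g (j+2)) x := by
        simp [dot]; ring
      rw [hlam, hlam]
      nlinarith [h1, h2]
    have e0 := hf (p j)
    have e1 := hf (p (j+1))
    have e2 := hf (p (j+2))
    rw [hdelta, hdelta] at e0 e1 e2
    simp [n1 j, n2 j, n3 j, (n3 j).symm] at e0 e1 e2
    constructor <;> linarith
  have gne : ∀ i : Fin 3, g i ≠ 0 := by
    intro i h
    have := (key (i+1) 0 1 (by rw [n4 i, h]; simp)).2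
    norm_num at this
  rw [Fintype.linearIndependent_iff]
  intro c hc
  have H : ∀ x, (∑ i : Fin 3, c (.inl i) • Phi0 i x)
      + (∑ i : Fin 3, c (.inr i) • PhiB i x) = 0 := by
    intro x
    have := congrFun hc x
    simpa [Fintype.sum_sum_type, Finset.sum_apply, Pi.smul_apply] using this
  -- vertices kill bubble fields
  have Hv : ∀ j : Fin 3, (∑ i : Fin 3, c (.inl i) • Phi0 i (p j)) = 0 := by
    intro j
    have := H (p j)
    have hB : ∀ i : Fin 3, PhiB i (p j) = 0 := by
      intro i
      rw [hPhiB, hdelta, hdelta]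
      rcases eq_or_ne i j with rfl | hij
      · simp [(n5 i).symm]
      · simp [hij]
    simp only [hB, smul_zero, Finset.sum_const_zero, add_zero] at this
    exact this
  have E0 := Hv 0
  have E1 := Hv 1
  have f1 : (3:Fin 3) = 0 := by decide
  have f2 : (2:Fin 3) ≠ 0 := by decide
  have f3 : (2:Fin 3) ≠ 1 := by decide
  simp only [Fin.sum_univ_three, hPhi0, hdelta] at E0 E1
  simp [f1, f2, f3, smul_sub, sub_eq_add_neg, ← neg_smul] at E0 E1
  have A0 : c (Sum.inl 0) = 0 := (key 0 (c (Sum.inl 0)) (-(c (Sum.inl 2))) (by simpa using E0)).1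
  have A2 : c (Sum.inl 2) = 0 := by
    have := (key 0 (c (Sum.inl 0)) (-(c (Sum.inl 2))) (by simpa using E0)).2
    linarith
  have A1 : c (Sum.inl 1) = 0 :=
    (key 1 (c (Sum.inl 1)) (-(c (Sum.inl 0))) (by rw [add_comm] at E1; simpa using E1)).1
  -- midpoints
  have Lmid : ∀ (i : Fin 3) (u v : ℝ × ℝ),
      lam i ((1/2:ℝ) • (u + v)) = (lam i u + lam i v)/2 := by
    intro i u v
    simp [hlam, dot, Prod.fst_add, Prod.snd_add, Prod.smul_fst, Prod.smul_snd]
    ring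
  have Hm : ∀ j : Fin 3, (∑ i : Fin 3, c (Sum.inr i) • PhiB i ((1/2:ℝ) • (p j + p (j+1)))) = 0 := by
    intro j
    have := H ((1/2:ℝ) • (p j + p (j+1)))
    simp only [Fin.sum_univ_three, A0, A1, A2, zero_smul, add_zero, zero_add] at this
    simpa [Fin.sum_univ_three] using this
  have lm : ∀ (i : Fin 3) (u v : ℝ × ℝ), lam i ((1/2:ℝ) • u + (1/2:ℝ) • v)
      = (lam i u + lam i v)/2 := by
    intro i u v
    simp [hlam, dot, Prod.fst_add, Prod.snd_add, Prod.smul_fst, Prod.smul_snd]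
    ring
  have B : ∀ j : Fin 3, c (Sum.inr j) = 0 := by
    have M0 := Hm 0
    have M1 := Hm 1
    have M2 := Hm 2
    simp only [Fin.sum_univ_three, hPhiB, Lmid,
      show (0+1:Fin 3)=1 from rfl, show (1+1:Fin 3)=2 from rfl,
      show (2+1:Fin 3)=0 from rfl, show (0+2:Fin 3)=2 from rfl,
      show (1+2:Fin 3)=0 from rfl, show (2+2:Fin 3)=1 from rfl] at M0 M1 M2
    norm_num [hdelta, Fin.ext_iff, smul_eq_zero] at M0 M1 M2
    intro j
    fin_cases j
    · rcases M0 with h | h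
      · exact h
      · exact absurd h (gne _)
    · rcases M1 with h | h
      · exact h
      · exact absurd h (gne _)
    · rcases M2 with h | h
      · exact h
      · exact absurd h (gne _)
  rintro (i | i)
  · fin_cases i <;> assumption
  · exact B i
end

section
/- Let K ⊂ ℝ² be a nondegenerate triangle and N0(K) = {a + b(−y, x)ᵀ : a ∈ ℝ², b ∈ ℝ} the lowest-order triangular Nédélec space. If v ∈ N0(K) satisfies ∫_{e_i} v · t_i ds = 0 for each of the three edges e_i of K (with t_i a unit tangent vector of e_i), then v = 0. Consequently, for every continuous vector field E there is a unique interpolant Π_K E ∈ N0(K) with ∫_{e_i} (Π_K E) · t_i ds = ∫_{e_i} E · t_i ds for i = 1, 2, 3. -/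
open MeasureTheory

/-- Edge functional: `∫_e v ⬝ t ds = ∫_0^1 v(q₀ + s(q₁−q₀)) ⬝ (q₁−q₀) ds` for the
segment `e` from `q₀` to `q₁`. -/
noncomputable def edgeInt (v : ℝ × ℝ → ℝ × ℝ) (q₀ q₁ : ℝ × ℝ) : ℝ :=
  ∫ s in (0 : ℝ)..1, dot (v (q₀ + s • (q₁ - q₀))) (q₁ - q₀)

/-- For a field in the Nédélec space `N0`, the tangential edge integral is explicitly
computable: the integrand is constant along the edge. -/
lemma edgeInt_formula (a : ℝ × ℝ) (b : ℝ) (q₀ q₁ : ℝ × ℝ) :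
    edgeInt (fun x => (a.1 - b * x.2, a.2 + b * x.1)) q₀ q₁ =
      a.1 * (q₁.1 - q₀.1) + a.2 * (q₁.2 - q₀.2) + b * (q₀.1 * q₁.2 - q₀.2 * q₁.1) := by
  have h : (fun s : ℝ => dot ((fun x : ℝ × ℝ => (a.1 - b * x.2, a.2 + b * x.1))
        (q₀ + s • (q₁ - q₀))) (q₁ - q₀))
      = fun _ : ℝ => a.1 * (q₁.1 - q₀.1) + a.2 * (q₁.2 - q₀.2)
          + b * (q₀.1 * q₁.2 - q₀.2 * q₁.1) := by
    funext s
    simp only [dot, Prod.fst_add, Prod.snd_add, Prod.fst_sub, Prod.snd_sub, Prod.smul_fst,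
      Prod.smul_snd, smul_eq_mul]
    ring
  rw [edgeInt, h]
  simp

/-- Nondegeneracy: twice the signed area of an affinely independent triple is nonzero. -/
lemma Dne (p : Fin 3 → ℝ × ℝ) (hp : AffineIndependent ℝ p) :
    (p 1).1 * (p 2).2 - (p 1).2 * (p 2).1 + ((p 2).1 * (p 0).2 - (p 2).2 * (p 0).1)
      + ((p 0).1 * (p 1).2 - (p 0).2 * (p 1).1) ≠ 0 := by
  intro hD
  rw [affineIndependent_iff] at hp
  set u : ℝ × ℝ := p 1 - p 0 with hu
  set w : ℝ × ℝ := p 2 - p 0 with hw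
  have hcross : u.1 * w.2 - u.2 * w.1 = 0 := by
    simp only [hu, hw, Prod.fst_sub, Prod.snd_sub]; linarith [hD]
  by_cases h0 : u = 0
  · have := hp Finset.univ ![-1, 1, 0] (by simp [Fin.sum_univ_three])
      (by
        simp only [Fin.sum_univ_three, Matrix.cons_val_zero, Matrix.cons_val_one,
          Matrix.head_cons, Matrix.cons_val_two, Matrix.tail_cons]
        have h01 : p 1 = p 0 := sub_eq_zero.mp h0
        rw [h01]; module) 1 (Finset.mem_univ _)
    norm_num at this
  · have huu : u.1 * u.1 + u.2 * u.2 ≠ 0 := by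
      intro h
      apply h0
      have h1 : u.1 = 0 := by nlinarith [sq_nonneg u.1, sq_nonneg u.2]
      have h2 : u.2 = 0 := by nlinarith [sq_nonneg u.1, sq_nonneg u.2]
      exact Prod.ext h1 h2
    set s : ℝ := -(w.1 * u.1 + w.2 * u.2) with hs
    set t : ℝ := u.1 * u.1 + u.2 * u.2 with ht
    have := hp Finset.univ ![-(s + t), s, t] (by simp [Fin.sum_univ_three])
      (by
        simp only [Fin.sum_univ_three, Matrix.cons_val_zero, Matrix.cons_val_one,
          Matrix.head_cons, Matrix.cons_val_two, Matrix.tail_cons]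
        have hsw : s • u + t • w = 0 := by
          apply Prod.ext <;> simp only [Prod.fst_add, Prod.snd_add, Prod.smul_fst,
            Prod.smul_snd, smul_eq_mul, Prod.fst_zero, Prod.snd_zero, hs, ht] <;>
            [linear_combination (-u.2) * hcross; linear_combination u.1 * hcross]
        have huw : s • (p 1 - p 0) + t • (p 2 - p 0) = 0 := by rw [← hu, ← hw]; exact hsw
        have heq : (-(s + t)) • p 0 + s • p 1 + t • p 2
            = s • (p 1 - p 0) + t • (p 2 - p 0) := by module
        rw [heq, huw]) 2 (Finset.mem_univ _)
    norm_num at this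
    exact huu this

/-- The three tangential edge functionals on `N0`, as a linear map `ℝ³ → ℝ³`. -/
noncomputable def edgeFun (p : Fin 3 → ℝ × ℝ) : ((ℝ × ℝ) × ℝ) →ₗ[ℝ] (Fin 3 → ℝ) where
  toFun ab i := ab.1.1 * ((p (i+2)).1 - (p (i+1)).1) + ab.1.2 * ((p (i+2)).2 - (p (i+1)).2)
      + ab.2 * ((p (i+1)).1 * (p (i+2)).2 - (p (i+1)).2 * (p (i+2)).1)
  map_add' x y := by funext i; simp; ring
  map_smul' c x := by funext i; simp; ring

lemma edgeFun_eq (p : Fin 3 → ℝ × ℝ) (ab : (ℝ × ℝ) × ℝ) (i : Fin 3) :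
    edgeInt (fun x => (ab.1.1 - ab.2 * x.2, ab.1.2 + ab.2 * x.1)) (p (i+1)) (p (i+2))
      = edgeFun p ab i := by
  exact edgeInt_formula ab.1 ab.2 (p (i+1)) (p (i+2))

lemma edgeFun_inj (p : Fin 3 → ℝ × ℝ) (hp : AffineIndependent ℝ p) :
    Function.Injective (edgeFun p) := by
  rw [← LinearMap.ker_eq_bot, LinearMap.ker_eq_bot']
  intro ab hab
  have hD := Dne p hp
  have e0 : ab.1.1 * ((p 2).1 - (p 1).1) + ab.1.2 * ((p 2).2 - (p 1).2)
      + ab.2 * ((p 1).1 * (p 2).2 - (p 1).2 * (p 2).1) = 0 := congrFun hab 0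
  have e1 : ab.1.1 * ((p 0).1 - (p 2).1) + ab.1.2 * ((p 0).2 - (p 2).2)
      + ab.2 * ((p 2).1 * (p 0).2 - (p 2).2 * (p 0).1) = 0 := congrFun hab 1
  have e2 : ab.1.1 * ((p 1).1 - (p 0).1) + ab.1.2 * ((p 1).2 - (p 0).2)
      + ab.2 * ((p 0).1 * (p 1).2 - (p 0).2 * (p 1).1) = 0 := congrFun hab 2
  set D := (p 1).1 * (p 2).2 - (p 1).2 * (p 2).1 + ((p 2).1 * (p 0).2 - (p 2).2 * (p 0).1)
      + ((p 0).1 * (p 1).2 - (p 0).2 * (p 1).1) with hDdef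
  have hb : ab.2 = 0 := by
    have : ab.2 * D = 0 := by rw [hDdef]; linear_combination e0 + e1 + e2
    exact (mul_eq_zero.mp this).resolve_right hD
  have ha1 : ab.1.1 = 0 := by
    have : ab.1.1 * D = 0 := by
      rw [hDdef]
      linear_combination ((p 0).2 - (p 2).2) * e0 - ((p 2).2 - (p 1).2) * e1
        - (((p 0).2 - (p 2).2) * ((p 1).1 * (p 2).2 - (p 1).2 * (p 2).1)
          - ((p 2).2 - (p 1).2) * ((p 2).1 * (p 0).2 - (p 2).2 * (p 0).1)) * hb
    exact (mul_eq_zero.mp this).resolve_right hD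
  have ha2 : ab.1.2 = 0 := by
    have : ab.1.2 * D = 0 := by
      rw [hDdef]
      linear_combination (-((p 0).1 - (p 2).1)) * e0 + ((p 2).1 - (p 1).1) * e1
        + ((((p 0).1 - (p 2).1)) * ((p 1).1 * (p 2).2 - (p 1).2 * (p 2).1)
          - ((p 2).1 - (p 1).1) * ((p 2).1 * (p 0).2 - (p 2).2 * (p 0).1)) * hb
    exact (mul_eq_zero.mp this).resolve_right hD
  have hsplit : ab = ((ab.1.1, ab.1.2), ab.2) := by simp
  rw [hsplit, ha1, ha2, hb]; rfl

lemma edgeFun_surj (p : Fin 3 → ℝ × ℝ) (hp : AffineIndependent ℝ p) :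
    Function.Surjective (edgeFun p) := by
  have h : Module.finrank ℝ ((ℝ × ℝ) × ℝ) = Module.finrank ℝ (Fin 3 → ℝ) := by simp
  exact (LinearMap.injective_iff_surjective_of_finrank_eq_finrank h).mp (edgeFun_inj p hp)

/-- On a nondegenerate triangle `K`, if `v ∈ N0(K) = {a + b(−y,x)ᵀ}`
has vanishing tangential edge integrals on all three edges then `v = 0`;
consequently, for every continuous vector field `E` there is a unique interpolant
`Π_K E ∈ N0(K)` with matching tangential edge integrals. -/
theorem stmt_14
    (p : Fin 3 → ℝ × ℝ) (hp : AffineIndependent ℝ p)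
    (K : Set (ℝ × ℝ)) (hK : K = convexHull ℝ (Set.range p)) :
    (∀ (v : ℝ × ℝ → ℝ × ℝ) (a : ℝ × ℝ) (b : ℝ),
      (∀ x : ℝ × ℝ, v x = (a.1 - b * x.2, a.2 + b * x.1)) →
      (∀ i : Fin 3, edgeInt v (p (i + 1)) (p (i + 2)) = 0) →
      ∀ x, v x = 0) ∧
    (∀ E : ℝ × ℝ → ℝ × ℝ, Continuous E →
      ∃! ab : (ℝ × ℝ) × ℝ, ∀ i : Fin 3,
        edgeInt (fun x => (ab.1.1 - ab.2 * x.2, ab.1.2 + ab.2 * x.1))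
            (p (i + 1)) (p (i + 2))
          = edgeInt E (p (i + 1)) (p (i + 2))) := by
  constructor
  · intro v a b hv hz
    have hv' : v = fun x => (a.1 - b * x.2, a.2 + b * x.1) := funext hv
    have hT : edgeFun p ((a, b)) = 0 := by
      funext i
      have := hz i
      rw [hv', edgeFun_eq p ((a, b)) i] at this
      exact this
    have hab : ((a, b) : (ℝ × ℝ) × ℝ) = 0 := by
      apply edgeFun_inj p hp
      rw [hT, map_zero]
    have ha : a = 0 := congrArg Prod.fst hab
    have hb : b = 0 := congrArg Prod.snd hab
    intro x
    rw [hv x, ha, hb]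
    simp
  · intro E _
    obtain ⟨ab₀, hab₀⟩ := edgeFun_surj p hp (fun i => edgeInt E (p (i + 1)) (p (i + 2)))
    refine ⟨ab₀, ?_, ?_⟩
    · intro i
      rw [edgeFun_eq p ab₀ i, hab₀]
    · intro ab hab
      apply edgeFun_inj p hp
      rw [hab₀]
      funext i
      rw [← edgeFun_eq p ab i]
      exact hab i
end

section
/- Let K ⊂ ℝ² be a nondegenerate triangle and let E be a continuously differentiable vector field on a neighborhood of K. Then the curl of the lowest-order Nédélec interpolant Π_K E is the mean value of curl E: curl(Π_K E) = (1/|K|) ∫_K curl E(x) dx (note that curl(Π_K E) is a constant, since Π_K E ∈ N0(K)). In particular, curl ∘ Π_K = π⁰_K ∘ curl, where π⁰_K is the L²-orthogonal projection onto constants on K. -/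
open MeasureTheory

/-- Scalar curl in 2D: `curl E = ∂ₓE₂ − ∂_y E₁`. -/
noncomputable def curl2 (E : ℝ × ℝ → ℝ × ℝ) (x : ℝ × ℝ) : ℝ :=
  (fderiv ℝ E x (1, 0)).2 - (fderiv ℝ E x (0, 1)).1

open Set

set_option maxHeartbeats 1000000

lemma clm_det (L : ℝ × ℝ →L[ℝ] ℝ × ℝ) :
    L.det = (L (1,0)).1 * (L (0,1)).2 - (L (0,1)).1 * (L (1,0)).2 := by
  have h : L.det = LinearMap.det (L : (ℝ×ℝ) →ₗ[ℝ] (ℝ×ℝ)) := rfl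
  rw [h, ← LinearMap.det_toMatrix (Module.Basis.finTwoProd ℝ), Matrix.det_fin_two]
  simp [LinearMap.toMatrix_apply, Module.Basis.finTwoProd_zero, Module.Basis.finTwoProd_one,
    Module.Basis.coe_finTwoProd_repr]

lemma decomp (v : ℝ × ℝ) : v = v.1 • ((1:ℝ),(0:ℝ)) + v.2 • ((0:ℝ),(1:ℝ)) := by
  simp [Prod.ext_iff]

lemma dot_antisym (L : ℝ × ℝ →L[ℝ] ℝ × ℝ) (v w : ℝ × ℝ) :
    dot (L v) w - dot (L w) v
      = ((L (1,0)).2 - (L (0,1)).1) * (v.1 * w.2 - v.2 * w.1) := by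
  rw [show L v = v.1 • L (1,0) + v.2 • L (0,1) by
        rw [← _root_.map_smul, ← _root_.map_smul, ← map_add, ← decomp],
      show L w = w.1 • L (1,0) + w.2 • L (0,1) by
        rw [← _root_.map_smul, ← _root_.map_smul, ← map_add, ← decomp]]
  simp [dot]
  ring

/-- reversal of edge integrals -/
lemma edgeInt_rev (f : ℝ × ℝ → ℝ × ℝ) (q₀ q₁ : ℝ × ℝ) :
    edgeInt f q₁ q₀ = - edgeInt f q₀ q₁ := by
  have h : edgeInt f q₁ q₀
      = ∫ s in (0:ℝ)..1, (fun s => -(dot (f (q₀ + s • (q₁ - q₀))) (q₁ - q₀))) (1 - s) := by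
    unfold edgeInt
    apply intervalIntegral.integral_congr
    intro s _
    have hpt : q₁ + s • (q₀ - q₁) = q₀ + (1-s) • (q₁ - q₀) := by module
    show dot (f (q₁ + s • (q₀ - q₁))) (q₀ - q₁)
        = -(dot (f (q₀ + (1-s) • (q₁ - q₀))) (q₁ - q₀))
    rw [hpt]
    simp [dot]
    ring
  rw [h, intervalIntegral.integral_comp_sub_left
      (fun s => -(dot (f (q₀ + s • (q₁ - q₀))) (q₁ - q₀))) 1]
  norm_num
  rfl

/-- derivative of a dot product -/
lemma hasDerivAt_dot {c d : ℝ → ℝ × ℝ} {c' d' : ℝ × ℝ} {t : ℝ}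
    (hc : HasDerivAt c c' t) (hd : HasDerivAt d d' t) :
    HasDerivAt (fun t => dot (c t) (d t)) (dot c' (d t) + dot (c t) d') t := by
  have h1 : HasDerivAt (fun t => (c t).1) c'.1 t := by
    have := (hasFDerivAt_fst (𝕜 := ℝ) (p := c t)).comp_hasDerivAt t hc
    exact this
  have h2 : HasDerivAt (fun t => (c t).2) c'.2 t := by
    have := (hasFDerivAt_snd (𝕜 := ℝ) (p := c t)).comp_hasDerivAt t hc
    exact this
  have h3 : HasDerivAt (fun t => (d t).1) d'.1 t := by
    have := (hasFDerivAt_fst (𝕜 := ℝ) (p := d t)).comp_hasDerivAt t hd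
    exact this
  have h4 : HasDerivAt (fun t => (d t).2) d'.2 t := by
    have := (hasFDerivAt_snd (𝕜 := ℝ) (p := d t)).comp_hasDerivAt t hd
    exact this
  have : HasDerivAt (fun t => (c t).1 * (d t).1 + (c t).2 * (d t).2)
      (c'.1 * (d t).1 + (c t).1 * d'.1 + (c'.2 * (d t).2 + (c t).2 * d'.2)) t :=
    (h1.mul h3).add (h2.mul h4)
  unfold dot
  convert this using 1
  ring

/-- parallel from vanishing cross product -/
lemma exists_smul_of_cross_eq_zero {x y : ℝ × ℝ} (hx : x ≠ 0)
    (h : x.1 * y.2 - x.2 * y.1 = 0) : ∃ r : ℝ, y = r • x := by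
  rcases eq_or_ne x.1 0 with h1 | h1
  · have h2 : x.2 ≠ 0 := by
      intro h2; exact hx (Prod.ext h1 h2)
    refine ⟨y.2 / x.2, ?_⟩
    have : y.1 = y.2 / x.2 * x.1 := by
      field_simp
      rw [h1] at h ⊢
      simp at h
      rcases h with h | h
      · exact absurd h h2
      · simp [h]
    exact Prod.ext this (by simp only [Prod.smul_snd, smul_eq_mul]; field_simp)
  · refine ⟨y.1 / x.1, ?_⟩
    have : y.2 = y.1 / x.1 * x.2 := by field_simp; linarith
    exact Prod.ext (by simp only [Prod.smul_fst, smul_eq_mul]; field_simp) this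

lemma green (U : Set (ℝ×ℝ)) (hU : IsOpen U) (G : ℝ×ℝ → ℝ×ℝ) (hG : ContDiffOn ℝ 1 G U)
    (p0 p1 p2 : ℝ×ℝ)
    (hmaps : ∀ z : ℝ×ℝ, z ∈ Icc (0:ℝ) 1 ×ˢ Icc (0:ℝ) 1 →
      p0 + z.2 • ((p1 - p0) + z.1 • (p2 - p1)) ∈ U) :
    edgeInt G p1 p2 + edgeInt G p2 p0 + edgeInt G p0 p1
      = ∫ z in Ioc (0:ℝ) 1 ×ˢ Ioc (0:ℝ) 1,
          z.2 * (((p1-p0).1*(p2-p1).2 - (p1-p0).2*(p2-p1).1)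
            * curl2 G (p0 + z.2 • ((p1 - p0) + z.1 • (p2 - p1)))) := by
  set v := p1 - p0 with hv
  set w := p2 - p1 with hw
  set Φ : ℝ×ℝ → ℝ×ℝ := fun z => p0 + z.2 • (v + z.1 • w) with hΦ
  set Q : Set (ℝ×ℝ) := Icc (0:ℝ) 1 ×ˢ Icc (0:ℝ) 1 with hQ
  have hQc : IsCompact Q := isCompact_Icc.prod isCompact_Icc
  have hΦc : Continuous Φ := by fun_prop
  have hGc : ContinuousOn G U := hG.continuousOn
  have hLc : ContinuousOn (fun x => fderiv ℝ G x) U :=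
    hG.continuousOn_fderiv_of_isOpen hU le_rfl
  have hGd : ∀ x ∈ U, HasFDerivAt G (fderiv ℝ G x) x := fun x hx =>
    ((hG.contDiffAt (hU.mem_nhds hx)).differentiableAt one_ne_zero).hasFDerivAt
  set F1 : ℝ×ℝ → ℝ :=
    fun z => dot (G (Φ z)) w + z.2 * dot (fderiv ℝ G (Φ z) (v + z.1 • w)) w with hF1
  set F2 : ℝ×ℝ → ℝ :=
    fun z => z.2 * dot (fderiv ℝ G (Φ z) w) (v + z.1 • w) + dot (G (Φ z)) w with hF2
  -- continuity of the integrands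
  have hGΦ : ContinuousOn (fun z => G (Φ z)) Q := hGc.comp hΦc.continuousOn hmaps
  have hLΦ : ContinuousOn (fun z => fderiv ℝ G (Φ z)) Q := hLc.comp hΦc.continuousOn hmaps
  have husc : Continuous (fun z : ℝ×ℝ => v + z.1 • w) := by fun_prop
  have hd1 : ContinuousOn (fun z => dot (G (Φ z)) w) Q := by
    simp only [dot]
    exact (hGΦ.fst.mul continuousOn_const).add (hGΦ.snd.mul continuousOn_const)
  have hd2 : ContinuousOn (fun z => dot (fderiv ℝ G (Φ z) (v + z.1 • w)) w) Q := by
    have h := hLΦ.clm_apply husc.continuousOn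
    simp only [dot]
    exact (h.fst.mul continuousOn_const).add (h.snd.mul continuousOn_const)
  have hd3 : ContinuousOn (fun z => dot (fderiv ℝ G (Φ z) w) (v + z.1 • w)) Q := by
    have h := hLΦ.clm_apply (continuousOn_const (c := w))
    simp only [dot]
    exact (h.fst.mul (husc.continuousOn.fst)).add (h.snd.mul (husc.continuousOn.snd))
  have hF1c : ContinuousOn F1 Q := hd1.add (continuous_snd.continuousOn.mul hd2)
  have hF2c : ContinuousOn F2 Q := (continuous_snd.continuousOn.mul hd3).add hd1
  -- FTC in the second variable
  have key1 : ∀ s ∈ Icc (0:ℝ) 1,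
      (∫ t in (0:ℝ)..1, F1 (s,t)) = dot (G (p1 + s • w)) w := by
    intro s hs
    have hmem : ∀ t ∈ Icc (0:ℝ) 1, Φ (s,t) ∈ U := fun t ht => hmaps (s,t) ⟨hs, ht⟩
    have hderiv : ∀ t ∈ uIcc (0:ℝ) 1,
        HasDerivAt (fun t => t * dot (G (Φ (s,t))) w) (F1 (s,t)) t := by
      intro t ht
      rw [uIcc_of_le zero_le_one] at ht
      have hpath : HasDerivAt (fun t : ℝ => Φ (s,t)) (v + s • w) t := by
        have h := ((hasDerivAt_id t).smul_const (v + s • w)).const_add p0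
        rw [one_smul] at h
        exact h
      have hcomp : HasDerivAt (fun t => G (Φ (s,t)))
          (fderiv ℝ G (Φ (s,t)) (v + s • w)) t :=
        (hGd _ (hmem t ht)).comp_hasDerivAt t hpath
      have hdot := hasDerivAt_dot hcomp (hasDerivAt_const t w)
      have h : HasDerivAt (fun t => t * dot (G (Φ (s,t))) w) (1 * dot (G (Φ (s, t))) w
          + id t * (dot ((fderiv ℝ G (Φ (s, t))) (v + s • w)) w + dot (G (Φ (s, t))) 0)) t :=
        (hasDerivAt_id t).mul hdot
      convert h using 1
      simp only [hF1, dot, id_eq, Prod.fst_zero, Prod.snd_zero, Prod.smul_fst,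
        Prod.smul_snd, smul_eq_mul]
      ring
    have hint : IntervalIntegrable (fun t => F1 (s,t)) volume 0 1 := by
      apply ContinuousOn.intervalIntegrable
      rw [uIcc_of_le zero_le_one]
      exact hF1c.comp (Continuous.continuousOn (by fun_prop)) (fun t ht => ⟨hs, ht⟩)
    rw [intervalIntegral.integral_eq_sub_of_hasDerivAt hderiv hint]
    have h1 : Φ (s,(1:ℝ)) = p1 + s • w := by
      show p0 + (1:ℝ) • (v + s • w) = p1 + s • w
      rw [hv]; module
    rw [h1]
    ring
  -- FTC in the first variable
  have key2 : ∀ t ∈ Icc (0:ℝ) 1,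
      (∫ s in (0:ℝ)..1, F2 (s,t))
        = dot (G (p0 + t • (p2 - p0))) (p2 - p0) - dot (G (p0 + t • v)) v := by
    intro t ht
    have hmem : ∀ s ∈ Icc (0:ℝ) 1, Φ (s,t) ∈ U := fun s hs => hmaps (s,t) ⟨hs, ht⟩
    have hderiv : ∀ s ∈ uIcc (0:ℝ) 1,
        HasDerivAt (fun s => dot (G (Φ (s,t))) (v + s • w)) (F2 (s,t)) s := by
      intro s hs
      rw [uIcc_of_le zero_le_one] at hs
      have hpath : HasDerivAt (fun s : ℝ => Φ (s,t)) (t • w) s := by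
        have h0 : HasDerivAt (fun s : ℝ => v + s • w) w s := by
          have h1 := ((hasDerivAt_id s).smul_const w).const_add v
          rw [one_smul] at h1
          exact h1
        have h := (h0.const_smul t).const_add p0
        exact h
      have hcomp : HasDerivAt (fun s => G (Φ (s,t)))
          (fderiv ℝ G (Φ (s,t)) (t • w)) s :=
        (hGd _ (hmem s hs)).comp_hasDerivAt s hpath
      have hu : HasDerivAt (fun s : ℝ => v + s • w) w s := by
        have h1 := ((hasDerivAt_id s).smul_const w).const_add v
        rw [one_smul] at h1
        exact h1
      have hdot := hasDerivAt_dot hcomp hu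
      convert hdot using 1
      have hsm : fderiv ℝ G (Φ (s,t)) (t • w) = t • fderiv ℝ G (Φ (s,t)) w :=
        (fderiv ℝ G (Φ (s,t))).map_smul t w
      simp only [hF2, hsm, dot, id_eq, Prod.fst_zero, Prod.snd_zero, Prod.smul_fst,
        Prod.smul_snd, smul_eq_mul]
      ring
    have hint : IntervalIntegrable (fun s => F2 (s,t)) volume 0 1 := by
      apply ContinuousOn.intervalIntegrable
      rw [uIcc_of_le zero_le_one]
      exact hF2c.comp (Continuous.continuousOn (by fun_prop)) (fun s hs => ⟨hs, ht⟩)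
    rw [intervalIntegral.integral_eq_sub_of_hasDerivAt hderiv hint]
    have h1 : Φ ((1:ℝ),t) = p0 + t • (p2 - p0) := by
      show p0 + t • (v + (1:ℝ) • w) = p0 + t • (p2 - p0)
      rw [hv, hw]; module
    have h2 : Φ ((0:ℝ),t) = p0 + t • v := by
      show p0 + t • (v + (0:ℝ) • w) = p0 + t • v
      module
    have h3 : v + (1:ℝ) • w = p2 - p0 := by rw [hv, hw]; module
    have h4 : v + (0:ℝ) • w = v := by simp
    rw [h1, h2, h3, h4]

  -- mapping facts in friendlier form
  have hmaps' : ∀ s t : ℝ, s ∈ Icc (0:ℝ) 1 → t ∈ Icc (0:ℝ) 1 →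
      p0 + t • (v + s • w) ∈ U := fun s t hs ht => hmaps (s,t) ⟨hs, ht⟩
  have hm02 : ∀ t ∈ Icc (0:ℝ) 1, p0 + t • (p2 - p0) ∈ U := by
    intro t ht
    have h := hmaps' 1 t (by norm_num) ht
    have heq : p0 + t • (v + (1:ℝ) • w) = p0 + t • (p2 - p0) := by rw [hv, hw]; module
    rwa [heq] at h
  have hm01 : ∀ t ∈ Icc (0:ℝ) 1, p0 + t • (p1 - p0) ∈ U := by
    intro t ht
    have h := hmaps' 0 t (by norm_num) ht
    have heq : p0 + t • (v + (0:ℝ) • w) = p0 + t • (p1 - p0) := by rw [hv]; module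
    rwa [heq] at h
  have hm12 : ∀ t ∈ Icc (0:ℝ) 1, p1 + t • (p2 - p1) ∈ U := by
    intro t ht
    have h := hmaps' t 1 ht (by norm_num)
    have heq : p0 + (1:ℝ) • (v + t • w) = p1 + t • (p2 - p1) := by rw [hv, hw]; module
    rwa [heq] at h
  -- integrability of edge integrands
  have hedgeint : ∀ q0' q1' : ℝ×ℝ, (∀ t ∈ Icc (0:ℝ) 1, q0' + t • (q1' - q0') ∈ U) →
      IntervalIntegrable (fun t => dot (G (q0' + t • (q1' - q0'))) (q1' - q0')) volume 0 1 := by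
    intro q0' q1' hmem
    apply ContinuousOn.intervalIntegrable
    rw [uIcc_of_le zero_le_one]
    have hc : ContinuousOn (fun t : ℝ => G (q0' + t • (q1' - q0'))) (Icc 0 1) :=
      hGc.comp (by fun_prop) hmem
    simp only [dot]
    exact (hc.fst.mul continuousOn_const).add (hc.snd.mul continuousOn_const)
  -- edge identities
  have e1 : edgeInt G p1 p2 = ∫ s in (0:ℝ)..1, (∫ t in (0:ℝ)..1, F1 (s,t)) := by
    unfold edgeInt
    apply intervalIntegral.integral_congr
    intro s hs
    rw [uIcc_of_le zero_le_one] at hs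
    show dot (G (p1 + s • (p2 - p1))) (p2 - p1) = ∫ t in (0:ℝ)..1, F1 (s, t)
    rw [key1 s hs, hw]
  have e2 : edgeInt G p0 p2 - edgeInt G p0 p1
      = ∫ t in (0:ℝ)..1, (∫ s in (0:ℝ)..1, F2 (s,t)) := by
    unfold edgeInt
    rw [← intervalIntegral.integral_sub (hedgeint p0 p2 hm02) (hedgeint p0 p1 hm01)]
    apply intervalIntegral.integral_congr
    intro t ht
    rw [uIcc_of_le zero_le_one] at ht
    show dot (G (p0 + t • (p2 - p0))) (p2 - p0) - dot (G (p0 + t • (p1 - p0))) (p1 - p0)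
        = ∫ s in (0:ℝ)..1, F2 (s, t)
    rw [key2 t ht, hv]
  have esum : edgeInt G p1 p2 + edgeInt G p2 p0 + edgeInt G p0 p1
      = (∫ s in (0:ℝ)..1, ∫ t in (0:ℝ)..1, F1 (s,t))
        - (∫ t in (0:ℝ)..1, ∫ s in (0:ℝ)..1, F2 (s,t)) := by
    rw [e1, edgeInt_rev G p0 p2]
    linarith [e2]
  -- convert iterated integrals to product set integrals
  have hIoc : Ioc (0:ℝ) 1 ×ˢ Ioc (0:ℝ) 1 ⊆ Q :=
    prod_mono Ioc_subset_Icc_self Ioc_subset_Icc_self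
  have volprod : (volume : Measure (ℝ×ℝ)) = (volume : Measure ℝ).prod volume :=
    Measure.volume_eq_prod ℝ ℝ
  have hIF1 : IntegrableOn F1 (Ioc (0:ℝ) 1 ×ˢ Ioc (0:ℝ) 1) volume :=
    (hF1c.integrableOn_compact hQc).mono_set hIoc
  have hIF2 : IntegrableOn F2 (Ioc (0:ℝ) 1 ×ˢ Ioc (0:ℝ) 1) volume :=
    (hF2c.integrableOn_compact hQc).mono_set hIoc
  have hIF2s : IntegrableOn (fun z : ℝ×ℝ => F2 (z.2, z.1))
      (Ioc (0:ℝ) 1 ×ˢ Ioc (0:ℝ) 1) volume := by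
    have hcs : ContinuousOn (fun z : ℝ×ℝ => F2 (z.2,z.1)) Q :=
      hF2c.comp continuous_swap.continuousOn (fun z hz => ⟨hz.2, hz.1⟩)
    exact (hcs.integrableOn_compact hQc).mono_set hIoc
  have c1 : (∫ s in (0:ℝ)..1, ∫ t in (0:ℝ)..1, F1 (s,t))
      = ∫ z in Ioc (0:ℝ) 1 ×ˢ Ioc (0:ℝ) 1, F1 z := by
    simp_rw [intervalIntegral.integral_of_le zero_le_one]
    rw [volprod]
    exact (setIntegral_prod F1 (by rwa [← volprod])).symm
  have c2 : (∫ t in (0:ℝ)..1, ∫ s in (0:ℝ)..1, F2 (s,t))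
      = ∫ z in Ioc (0:ℝ) 1 ×ˢ Ioc (0:ℝ) 1, F2 z := by
    simp_rw [intervalIntegral.integral_of_le zero_le_one]
    have hsw : Integrable (Function.uncurry fun t s => F2 (s,t))
        ((volume.restrict (Ioc (0:ℝ) 1)).prod (volume.restrict (Ioc (0:ℝ) 1))) := by
      rw [Measure.prod_restrict, ← volprod]
      exact hIF2s
    rw [MeasureTheory.integral_integral_swap hsw, volprod]
    exact (setIntegral_prod F2 (by rwa [← volprod])).symm
  rw [esum, c1, c2, ← integral_sub hIF1 hIF2]
  apply setIntegral_congr_fun (measurableSet_Ioc.prod measurableSet_Ioc)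
  intro z hz
  have key := dot_antisym (fderiv ℝ G (p0 + z.2 • (v + z.1 • w))) (v + z.1 • w) w
  have hcross : (v + z.1 • w).1 * w.2 - (v + z.1 • w).2 * w.1
      = v.1 * w.2 - v.2 * w.1 := by
    simp only [Prod.fst_add, Prod.snd_add, Prod.smul_fst, Prod.smul_snd, smul_eq_mul]
    ring
  simp only [hF1, hF2, hΦ]
  calc dot (G (p0 + z.2 • (v + z.1 • w))) w
        + z.2 * dot (fderiv ℝ G (p0 + z.2 • (v + z.1 • w)) (v + z.1 • w)) w
      - (z.2 * dot (fderiv ℝ G (p0 + z.2 • (v + z.1 • w)) w) (v + z.1 • w)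
        + dot (G (p0 + z.2 • (v + z.1 • w))) w)
      = z.2 * (dot (fderiv ℝ G (p0 + z.2 • (v + z.1 • w)) (v + z.1 • w)) w
          - dot (fderiv ℝ G (p0 + z.2 • (v + z.1 • w)) w) (v + z.1 • w)) := by ring
    _ = z.2 * ((v.1 * w.2 - v.2 * w.1)
          * curl2 G (p0 + z.2 • (v + z.1 • w))) := by
        rw [key, hcross]
        unfold curl2
        ring

/-- triangle parametrization -/
noncomputable def Phi (p : Fin 3 → ℝ × ℝ) (z : ℝ × ℝ) : ℝ × ℝ :=
  p 0 + z.2 • ((p 1 - p 0) + z.1 • (p 2 - p 1))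

noncomputable def Dd (p : Fin 3 → ℝ × ℝ) : ℝ :=
  (p 1 - p 0).1 * (p 2 - p 1).2 - (p 1 - p 0).2 * (p 2 - p 1).1

lemma range_p (p : Fin 3 → ℝ × ℝ) : Set.range p = {p 0, p 1, p 2} := by
  ext x
  simp only [Set.mem_range, Set.mem_insert_iff, Set.mem_singleton_iff]
  constructor
  · rintro ⟨i, rfl⟩; fin_cases i <;> simp
  · rintro (rfl | rfl | rfl)
    exacts [⟨0, rfl⟩, ⟨1, rfl⟩, ⟨2, rfl⟩]

lemma tri_param (p : Fin 3 → ℝ × ℝ) :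
    convexHull ℝ (Set.range p) = Phi p '' (Icc (0:ℝ) 1 ×ˢ Icc (0:ℝ) 1) := by
  rw [range_p, convexHull_insert (by simp), convexHull_pair]
  ext x
  rw [mem_convexJoin]
  constructor
  · rintro ⟨a, ha, y, hy, hx⟩
    rw [Set.mem_singleton_iff] at ha
    subst ha
    rw [segment_eq_image'] at hy hx
    obtain ⟨s, hs, rfl⟩ := hy
    obtain ⟨t, ht, rfl⟩ := hx
    exact ⟨(s,t), ⟨hs, ht⟩, by show Phi p (s,t) = _; unfold Phi; module⟩
  · rintro ⟨⟨s,t⟩, hst, rfl⟩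
    obtain ⟨hs, ht⟩ := hst
    refine ⟨p 0, rfl, p 1 + s • (p 2 - p 1), ?_, ?_⟩
    · rw [segment_eq_image']; exact ⟨s, hs, rfl⟩
    · rw [segment_eq_image']
      exact ⟨t, ht, by show _ = Phi p (s,t); unfold Phi; module⟩

lemma seg_null (x y : ℝ × ℝ) : volume (segment ℝ x y) = 0 := by
  have hsub : segment ℝ x y ⊆ (affineSpan ℝ {x, y} : Set (ℝ × ℝ)) := by
    apply (affineSpan ℝ {x, y}).convex.segment_subset <;>
      apply subset_affineSpan <;> simp
  apply measure_mono_null hsub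
  apply Measure.addHaar_affineSubspace
  intro htop
  have hd := congrArg AffineSubspace.direction htop
  rw [AffineSubspace.direction_top, direction_affineSpan, vectorSpan_pair] at hd
  have h2 : Module.finrank ℝ (ℝ × ℝ) ≤ 1 := by
    rw [vsub_eq_sub] at hd
    rw [← finrank_top ℝ (ℝ × ℝ), ← hd]
    rcases eq_or_ne (x - y) 0 with h | h
    · rw [h, Submodule.span_zero_singleton]
      simp
    · rw [finrank_span_singleton h]
  have h3 : Module.finrank ℝ (ℝ × ℝ) = 2 := by
    rw [Module.finrank_prod, Module.finrank_self]
  omega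

lemma D_ne (p : Fin 3 → ℝ × ℝ) (hp : AffineIndependent ℝ p) : Dd p ≠ 0 := by
  intro hD
  unfold Dd at hD
  apply affineIndependent_iff_not_collinear.mp hp
  have hv0 : p 1 - p 0 ≠ 0 := sub_ne_zero.mpr (hp.injective.ne (by decide : (1:Fin 3) ≠ 0))
  have hc : (p 1 - p 0).1 * (p 2 - p 0).2 - (p 1 - p 0).2 * (p 2 - p 0).1 = 0 := by
    have h1 : p 2 - p 0 = (p 1 - p 0) + (p 2 - p 1) := by module
    rw [h1]
    simp only [Prod.fst_add, Prod.snd_add]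
    linear_combination hD
  rw [collinear_iff_of_mem (show p 0 ∈ Set.range p from ⟨0, rfl⟩)]
  refine ⟨p 1 - p 0, ?_⟩
  rintro x ⟨i, rfl⟩
  fin_cases i
  · exact ⟨0, by show p 0 = (0:ℝ) • (p 1 - p 0) + p 0; module⟩
  · exact ⟨1, by show p 1 = (1:ℝ) • (p 1 - p 0) + p 0; module⟩
  · obtain ⟨r, hr⟩ := exists_smul_of_cross_eq_zero hv0 hc
    exact ⟨r, by show p 2 = r • (p 1 - p 0) + p 0; rw [← hr]; module⟩

lemma phi_injOn (p : Fin 3 → ℝ × ℝ) (hD : Dd p ≠ 0) :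
    InjOn (Phi p) (Ioc (0:ℝ) 1 ×ˢ Ioc (0:ℝ) 1) := by
  intro z hz z' hz' heq
  unfold Phi at heq
  have h2 : z.2 • ((p 1 - p 0) + z.1 • (p 2 - p 1))
      = z'.2 • ((p 1 - p 0) + z'.1 • (p 2 - p 1)) := add_left_cancel heq
  have e1 := congrArg Prod.fst h2
  have e2 := congrArg Prod.snd h2
  simp only [Prod.smul_fst, Prod.smul_snd, Prod.fst_add, Prod.snd_add, smul_eq_mul] at e1 e2
  have ht : z.2 = z'.2 := by
    have hDt : z.2 * Dd p = z'.2 * Dd p := by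
      unfold Dd
      linear_combination e1 * (p 2 - p 1).2 - e2 * (p 2 - p 1).1
    exact mul_right_cancel₀ hD hDt
  have ht0 : z.2 ≠ 0 := ne_of_gt hz.2.1
  have hs : z.1 = z'.1 := by
    by_contra hne
    rw [← ht] at e1 e2
    have f1 : z.1 * (p 2 - p 1).1 = z'.1 * (p 2 - p 1).1 := by
      have := mul_left_cancel₀ ht0 e1
      linarith
    have f2 : z.1 * (p 2 - p 1).2 = z'.1 * (p 2 - p 1).2 := by
      have := mul_left_cancel₀ ht0 e2
      linarith
    have g1 : (z.1 - z'.1) * (p 2 - p 1).1 = 0 := by linear_combination f1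
    have g2 : (z.1 - z'.1) * (p 2 - p 1).2 = 0 := by linear_combination f2
    have hz1 : z.1 - z'.1 ≠ 0 := sub_ne_zero.mpr hne
    have w1 : (p 2 - p 1).1 = 0 := by
      rcases mul_eq_zero.mp g1 with h | h
      · exact absurd h hz1
      · exact h
    have w2 : (p 2 - p 1).2 = 0 := by
      rcases mul_eq_zero.mp g2 with h | h
      · exact absurd h hz1
      · exact h
    apply hD
    unfold Dd
    rw [w1, w2]
    ring
  exact Prod.ext hs ht

/-- the derivative of the triangle parametrization -/
noncomputable def Fder (v w : ℝ × ℝ) (z : ℝ × ℝ) : ℝ × ℝ →L[ℝ] ℝ × ℝ :=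
  (ContinuousLinearMap.snd ℝ ℝ ℝ).smulRight v
    + (z.2 • ContinuousLinearMap.fst ℝ ℝ ℝ + z.1 • ContinuousLinearMap.snd ℝ ℝ ℝ).smulRight w

lemma hasFDeriv_phi (p : Fin 3 → ℝ × ℝ) (z : ℝ × ℝ) :
    HasFDerivAt (Phi p) (Fder (p 1 - p 0) (p 2 - p 1) z) z := by
  have h : Phi p = fun z : ℝ × ℝ =>
      p 0 + (z.2 • (p 1 - p 0) + (z.2 * z.1) • (p 2 - p 1)) := by
    funext z; unfold Phi; rw [smul_add, smul_smul]
  rw [h]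
  have h1 : HasFDerivAt (fun z : ℝ × ℝ => z.2 • (p 1 - p 0))
      ((ContinuousLinearMap.snd ℝ ℝ ℝ).smulRight (p 1 - p 0)) z :=
    hasFDerivAt_snd.smul_const _
  have hm : HasFDerivAt (fun z : ℝ × ℝ => z.2 * z.1)
      (z.2 • ContinuousLinearMap.fst ℝ ℝ ℝ + z.1 • ContinuousLinearMap.snd ℝ ℝ ℝ) z :=
    hasFDerivAt_snd.mul hasFDerivAt_fst
  have h2 := hm.smul_const (p 2 - p 1)
  exact (h1.add h2).const_add (p 0)

lemma Fder_det (v w : ℝ × ℝ) (z : ℝ × ℝ) :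
    |(Fder v w z).det| = |z.2| * |v.1 * w.2 - v.2 * w.1| := by
  rw [clm_det]
  have h10 : Fder v w z (1,0) = z.2 • w := by
    simp [Fder]
  have h01 : Fder v w z (0,1) = v + z.1 • w := by
    simp [Fder]
  rw [h10, h01]
  simp only [Prod.smul_fst, Prod.smul_snd, Prod.fst_add, Prod.snd_add, smul_eq_mul]
  rw [← abs_mul, ← abs_neg]
  congr 1
  ring

/-- For a C¹ vector field `E` on a neighborhood of a nondegenerate
triangle `K`, the (constant) curl of the lowest-order Nédélec interpolant
`Π_K E = a + b(−y,x)ᵀ` (characterized by matching tangential edge integrals)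
equals the mean value of `curl E` over `K`: `curl(Π_K E) = 2b = (1/|K|) ∫_K curl E`. -/
theorem stmt_15
    (p : Fin 3 → ℝ × ℝ) (hp : AffineIndependent ℝ p)
    (K : Set (ℝ × ℝ)) (hK : K = convexHull ℝ (Set.range p))
    (U : Set (ℝ × ℝ)) (hU : IsOpen U) (hKU : K ⊆ U)
    (E : ℝ × ℝ → ℝ × ℝ) (hE : ContDiffOn ℝ 1 E U)
    (a : ℝ × ℝ) (b : ℝ) (PE : ℝ × ℝ → ℝ × ℝ)
    (hPE : ∀ x : ℝ × ℝ, PE x = (a.1 - b * x.2, a.2 + b * x.1))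
    (hinterp : ∀ i : Fin 3,
      edgeInt PE (p (i + 1)) (p (i + 2)) = edgeInt E (p (i + 1)) (p (i + 2))) :
    2 * b = (1 / (volume K).toReal) * ∫ x in K, curl2 E x := by
  -- basic geometric data
  have hDne : Dd p ≠ 0 := D_ne p hp
  have hKim : K = Phi p '' (Icc (0:ℝ) 1 ×ˢ Icc (0:ℝ) 1) := by
    rw [hK]; exact tri_param p
  have hQcompact : IsCompact (Icc (0:ℝ) 1 ×ˢ Icc (0:ℝ) 1) := isCompact_Icc.prod isCompact_Icc
  have hIoc : Ioc (0:ℝ) 1 ×ˢ Ioc (0:ℝ) 1 ⊆ Icc (0:ℝ) 1 ×ˢ Icc (0:ℝ) 1 :=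
    prod_mono Ioc_subset_Icc_self Ioc_subset_Icc_self
  have hmeasS : MeasurableSet (Ioc (0:ℝ) 1 ×ˢ Ioc (0:ℝ) 1) :=
    measurableSet_Ioc.prod measurableSet_Ioc
  have volprod : (volume : Measure (ℝ×ℝ)) = (volume : Measure ℝ).prod volume :=
    Measure.volume_eq_prod ℝ ℝ
  have hKc : Convex ℝ K := hK ▸ convex_convexHull ℝ _
  have hmaps : ∀ z : ℝ×ℝ, z ∈ Icc (0:ℝ) 1 ×ˢ Icc (0:ℝ) 1 → Phi p z ∈ U := by
    intro z hz
    apply hKU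
    rw [hKim]
    exact mem_image_of_mem _ hz
  -- the linear part of PE
  set LPE : ℝ × ℝ →L[ℝ] ℝ × ℝ :=
    ((-b) • ContinuousLinearMap.snd ℝ ℝ ℝ).prod (b • ContinuousLinearMap.fst ℝ ℝ ℝ) with hLPE
  have hLPEapp : ∀ x : ℝ × ℝ, LPE x = (-b * x.2, b * x.1) := fun x => rfl
  have hPEfun : PE = fun x => a + LPE x := by
    funext x
    rw [hPE x, hLPEapp x]
    rw [Prod.ext_iff]
    constructor <;> simp <;> ring
  have hPEd : ∀ x : ℝ × ℝ, HasFDerivAt PE LPE x := by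
    intro x
    rw [hPEfun]
    exact LPE.hasFDerivAt.const_add a
  have hPEcd : ContDiff ℝ 1 PE := by
    rw [hPEfun]
    exact contDiff_const.add LPE.contDiff
  set G : ℝ × ℝ → ℝ × ℝ := fun x => E x - PE x with hGdef
  have hGC : ContDiffOn ℝ 1 G U := hE.sub hPEcd.contDiffOn
  -- the edge integrals of G vanish
  have hedge0 : ∀ q0 q1 : ℝ × ℝ, q0 ∈ K → q1 ∈ K →
      edgeInt PE q0 q1 = edgeInt E q0 q1 → edgeInt G q0 q1 = 0 := by
    intro q0 q1 hq0 hq1 hint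
    have hseg : ∀ t ∈ Icc (0:ℝ) 1, q0 + t • (q1 - q0) ∈ U := fun t ht =>
      hKU (hKc.add_smul_sub_mem hq0 hq1 ht)
    have hie : IntervalIntegrable
        (fun t => dot (E (q0 + t • (q1 - q0))) (q1 - q0)) volume 0 1 := by
      apply ContinuousOn.intervalIntegrable
      rw [uIcc_of_le zero_le_one]
      have hc : ContinuousOn (fun t : ℝ => E (q0 + t • (q1 - q0))) (Icc 0 1) :=
        hE.continuousOn.comp (by fun_prop) hseg
      simp only [dot]
      exact (hc.fst.mul continuousOn_const).add (hc.snd.mul continuousOn_const)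
    have hip : IntervalIntegrable
        (fun t => dot (PE (q0 + t • (q1 - q0))) (q1 - q0)) volume 0 1 := by
      apply ContinuousOn.intervalIntegrable
      have hc : Continuous fun t : ℝ => PE (q0 + t • (q1 - q0)) := by
        rw [hPEfun]; fun_prop
      have hc2 : Continuous fun t : ℝ => dot (PE (q0 + t • (q1 - q0))) (q1 - q0) := by
        simp only [dot]
        exact (hc.fst.mul continuous_const).add (hc.snd.mul continuous_const)
      exact hc2.continuousOn
    show edgeInt G q0 q1 = 0
    unfold edgeInt
    have heq : (fun s : ℝ => dot (G (q0 + s • (q1 - q0))) (q1 - q0))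
        = fun s => dot (E (q0 + s • (q1 - q0))) (q1 - q0)
            - dot (PE (q0 + s • (q1 - q0))) (q1 - q0) := by
      funext s
      simp only [hGdef, dot, Prod.fst_sub, Prod.snd_sub]
      ring
    rw [heq, intervalIntegral.integral_sub hie hip]
    unfold edgeInt at hint
    linarith
  have h0K : p 0 ∈ K := hK ▸ subset_convexHull ℝ _ ⟨0, rfl⟩
  have h1K : p 1 ∈ K := hK ▸ subset_convexHull ℝ _ ⟨1, rfl⟩
  have h2K : p 2 ∈ K := hK ▸ subset_convexHull ℝ _ ⟨2, rfl⟩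
  have hz1 : edgeInt G (p 1) (p 2) = 0 := hedge0 _ _ h1K h2K (hinterp 0)
  have hz2 : edgeInt G (p 2) (p 0) = 0 := hedge0 _ _ h2K h0K (hinterp 1)
  have hz3 : edgeInt G (p 0) (p 1) = 0 := hedge0 _ _ h0K h1K (hinterp 2)
  -- Green's identity for G
  have hGreen : edgeInt G (p 1) (p 2) + edgeInt G (p 2) (p 0) + edgeInt G (p 0) (p 1)
      = ∫ z in Ioc (0:ℝ) 1 ×ˢ Ioc (0:ℝ) 1, z.2 * (Dd p * curl2 G (Phi p z)) :=
    green U hU G hGC (p 0) (p 1) (p 2) hmaps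
  have h0 : (0:ℝ) = ∫ z in Ioc (0:ℝ) 1 ×ˢ Ioc (0:ℝ) 1, z.2 * (Dd p * curl2 G (Phi p z)) := by
    rw [← hGreen, hz1, hz2, hz3]
    ring
  -- curl of G
  have hcurlG : ∀ x ∈ U, curl2 G x = curl2 E x - 2 * b := by
    intro x hx
    have hEd : DifferentiableAt ℝ E x :=
      (hE.contDiffAt (hU.mem_nhds hx)).differentiableAt one_ne_zero
    have hfd : fderiv ℝ G x = fderiv ℝ E x - LPE := by
      have h := fderiv_sub hEd (hPEd x).differentiableAt
      rw [(hPEd x).fderiv] at h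
      exact h
    unfold curl2
    rw [hfd]
    simp only [ContinuousLinearMap.sub_apply, Prod.fst_sub, Prod.snd_sub, hLPEapp]
    ring
  -- continuity and integrability of the transformed curl
  have hcurlEc : ContinuousOn (curl2 E) U := by
    have h := hE.continuousOn_fderiv_of_isOpen hU le_rfl
    show ContinuousOn (fun x => (fderiv ℝ E x (1,0)).2 - (fderiv ℝ E x (0,1)).1) U
    exact ((h.clm_apply continuousOn_const).snd).sub ((h.clm_apply continuousOn_const).fst)
  have hPhic : Continuous (Phi p) := by unfold Phi; fun_prop
  have hcont : ContinuousOn (fun z => z.2 * curl2 E (Phi p z)) (Icc (0:ℝ) 1 ×ˢ Icc (0:ℝ) 1) :=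
    continuous_snd.continuousOn.mul (hcurlEc.comp hPhic.continuousOn hmaps)
  have hIcE : IntegrableOn (fun z => z.2 * curl2 E (Phi p z))
      (Ioc (0:ℝ) 1 ×ˢ Ioc (0:ℝ) 1) volume :=
    (hcont.integrableOn_compact hQcompact).mono_set hIoc
  have hIt : IntegrableOn (fun z : ℝ × ℝ => z.2) (Ioc (0:ℝ) 1 ×ˢ Ioc (0:ℝ) 1) volume :=
    (continuous_snd.continuousOn.integrableOn_compact hQcompact).mono_set hIoc
  -- ∫ z.2 over the square is 1/2
  have hI2 : (∫ z in Ioc (0:ℝ) 1 ×ˢ Ioc (0:ℝ) 1, z.2) = 1/2 := by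
    rw [volprod] at hIt ⊢
    rw [setIntegral_prod _ hIt]
    have hone : (∫ t in Ioc (0:ℝ) 1, t) = 1/2 := by
      rw [← intervalIntegral.integral_of_le zero_le_one, integral_id]
      norm_num
    simp_rw [hone]
    rw [setIntegral_const]
    simp [Real.volume_Ioc]
  -- main key identity
  have hkey : (∫ z in Ioc (0:ℝ) 1 ×ˢ Ioc (0:ℝ) 1, z.2 * curl2 E (Phi p z)) = b := by
    have hcongr : EqOn (fun z : ℝ × ℝ => z.2 * (Dd p * curl2 G (Phi p z)))
        (fun z : ℝ × ℝ => Dd p * (z.2 * curl2 E (Phi p z)) - (Dd p * (2*b)) * z.2)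
        (Ioc (0:ℝ) 1 ×ˢ Ioc (0:ℝ) 1) := by
      intro z hz
      simp only
      rw [hcurlG _ (hmaps z (hIoc hz))]
      ring
    have h2 : (∫ z in Ioc (0:ℝ) 1 ×ˢ Ioc (0:ℝ) 1, z.2 * (Dd p * curl2 G (Phi p z)))
        = Dd p * (∫ z in Ioc (0:ℝ) 1 ×ˢ Ioc (0:ℝ) 1, z.2 * curl2 E (Phi p z))
          - (Dd p * (2*b)) * (1/2) := by
      rw [setIntegral_congr_fun hmeasS hcongr,
        integral_sub (hIcE.const_mul (Dd p)) (hIt.const_mul (Dd p * (2*b))),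
        MeasureTheory.integral_const_mul, MeasureTheory.integral_const_mul, hI2]
    have h3 : Dd p * (∫ z in Ioc (0:ℝ) 1 ×ˢ Ioc (0:ℝ) 1, z.2 * curl2 E (Phi p z))
        = Dd p * b := by
      rw [← h0] at h2
      linarith
    exact mul_left_cancel₀ hDne h3
  -- change of variables
  have hCoV : ∀ g : ℝ × ℝ → ℝ,
      (∫ x in Phi p '' (Ioc (0:ℝ) 1 ×ˢ Ioc (0:ℝ) 1), g x)
        = ∫ z in Ioc (0:ℝ) 1 ×ˢ Ioc (0:ℝ) 1, (z.2 * |Dd p|) • g (Phi p z) := by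
    intro g
    have hder : ∀ z ∈ Ioc (0:ℝ) 1 ×ˢ Ioc (0:ℝ) 1,
        HasFDerivWithinAt (Phi p) (Fder (p 1 - p 0) (p 2 - p 1) z)
          (Ioc (0:ℝ) 1 ×ˢ Ioc (0:ℝ) 1) z :=
      fun z _ => (hasFDeriv_phi p z).hasFDerivWithinAt
    rw [integral_image_eq_integral_abs_det_fderiv_smul volume hmeasS hder (phi_injOn p hDne) g]
    apply setIntegral_congr_fun hmeasS
    intro z hz
    simp only
    rw [Fder_det, abs_of_pos hz.2.1]
    rfl
  -- K agrees a.e. with the open image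
  have hKS : K =ᵐ[volume] Phi p '' (Ioc (0:ℝ) 1 ×ˢ Ioc (0:ℝ) 1) := by
    have hsub : Phi p '' (Ioc (0:ℝ) 1 ×ˢ Ioc (0:ℝ) 1) ⊆ K := by
      rw [hKim]; exact image_mono hIoc
    have hdiff : K \ Phi p '' (Ioc (0:ℝ) 1 ×ˢ Ioc (0:ℝ) 1) ⊆ segment ℝ (p 0) (p 1) := by
      rintro x ⟨hxK, hxn⟩
      rw [hKim] at hxK
      obtain ⟨z, hz, rfl⟩ := hxK
      by_cases h2 : 0 < z.2
      · by_cases h1 : 0 < z.1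
        · exact absurd (mem_image_of_mem (Phi p)
            (show z ∈ Ioc (0:ℝ) 1 ×ˢ Ioc (0:ℝ) 1 from ⟨⟨h1, hz.1.2⟩, ⟨h2, hz.2.2⟩⟩)) hxn
        · have hz1 : z.1 = 0 := le_antisymm (not_lt.mp h1) hz.1.1
          rw [segment_eq_image']
          refine ⟨z.2, ⟨hz.2.1, hz.2.2⟩, ?_⟩
          show p 0 + z.2 • (p 1 - p 0) = Phi p z
          unfold Phi
          rw [hz1]
          module
      · have hz2 : z.2 = 0 := le_antisymm (not_lt.mp h2) hz.2.1
        have hPz : Phi p z = p 0 := by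
          unfold Phi
          rw [hz2]
          simp
        rw [hPz]
        exact left_mem_segment ℝ _ _
    apply MeasureTheory.ae_eq_set.mpr
    constructor
    · exact measure_mono_null hdiff (seg_null (p 0) (p 1))
    · rw [Set.diff_eq_empty.mpr hsub]
      simp
  -- area of K
  have harea : (volume K).toReal = |Dd p| / 2 := by
    have h1 : ∫ x in K, (1:ℝ) = (volume K).toReal := by
      rw [setIntegral_const]; simp; rfl
    have h2 : ∫ x in K, (1:ℝ) = ∫ z in Ioc (0:ℝ) 1 ×ˢ Ioc (0:ℝ) 1, (z.2 * |Dd p|) • (1:ℝ) := by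
      rw [setIntegral_congr_set hKS, hCoV]
    rw [← h1, h2]
    simp only [smul_eq_mul, mul_one]
    have h3 : (fun z : ℝ × ℝ => z.2 * |Dd p|) = fun z : ℝ × ℝ => |Dd p| * z.2 := by
      funext z; ring
    rw [h3, MeasureTheory.integral_const_mul, hI2]
    ring
  -- the curl integral over K
  have hcurlint : ∫ x in K, curl2 E x = |Dd p| * b := by
    rw [setIntegral_congr_set hKS, hCoV]
    simp only [smul_eq_mul]
    have h3 : (fun z : ℝ × ℝ => z.2 * |Dd p| * curl2 E (Phi p z))
        = fun z : ℝ × ℝ => |Dd p| * (z.2 * curl2 E (Phi p z)) := by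
      funext z; ring
    rw [h3, MeasureTheory.integral_const_mul, hkey]
  rw [harea, hcurlint]
  have habs : |Dd p| ≠ 0 := abs_ne_zero.mpr hDne
  field_simp
end
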